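/- arXiv:2002.08280 — 9 statements merged into one kernel-verified Lean document; each statement's English description precedes it below -/
import Mathlib

section
/- Let f₁, ..., fₙ : ℝ → M be monotone (non-decreasing) functions into a linearly ordered MV-algebra M (viewed as the interval [0,u] in a linearly ordered abelian group G). Then the function F(s₁,...,sₙ) = ⋀_{i=1}^n f_i(s_i) satisfies the volume condition: for all reals a_i ≤ b_i (i = 1,...,n), the alternating sum Σ_{φ ∈ {0,1}^n} sgn(φ) · ⋀_{i=1}^n x^i_{φ(i)} ≥ 0, where x^i_0 = f_i(a_i), x^i_1 = f_i(b_i), and sgn(φ) = +1 if |φ⁻¹(0)| is even and −1 otherwise (the sum is computed in G). -/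
/-- Let `f₁,…,fₙ : ℝ → [0,u] ⊆ G` be monotone functions into a linearly ordered
abelian group `G`. Then `F(s₁,…,sₙ) = ⋀ᵢ fᵢ(sᵢ)` satisfies the volume condition:
for all `aᵢ ≤ bᵢ`, `Σ_{φ ∈ {0,1}ⁿ} sgn(φ) • ⋀ᵢ x^i_{φ(i)} ≥ 0`, where
`x^i_0 = fᵢ(aᵢ)`, `x^i_1 = fᵢ(bᵢ)` and `sgn(φ) = (-1)^{|φ⁻¹(0)|}`. -/
theorem min_of_monotone_satisfies_volume_condition
    {G : Type*} [AddCommGroup G] [LinearOrder G] [IsOrderedAddMonoid G] {n : ℕ} (hn : 0 < n) (u : G)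
    (f : Fin n → ℝ → G) (hmono : ∀ i, Monotone (f i))
    (hmem : ∀ i t, f i t ∈ Set.Icc (0 : G) u)
    (a b : Fin n → ℝ) (hab : ∀ i, a i ≤ b i) :
    0 ≤ ∑ φ : Fin n → Bool,
      (-1 : ℤ) ^ (Finset.univ.filter fun i => φ i = false).card •
        Finset.univ.inf' (Finset.univ_nonempty_iff.mpr (Fin.pos_iff_nonempty.mp hn))
          (fun i => f i (if φ i then b i else a i)) := by
  classical
  have hne : (Finset.univ : Finset (Fin n)).Nonempty :=
    Finset.univ_nonempty_iff.mpr (Fin.pos_iff_nonempty.mp hn)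
  obtain ⟨j, -, hj⟩ := Finset.exists_max_image Finset.univ (fun i => f i (a i)) hne
  set T : (Fin n → Bool) → G := fun φ =>
    Finset.univ.inf' hne (fun i => f i (if φ i then b i else a i)) with hT
  set c : (Fin n → Bool) → ℕ :=
    fun φ => (Finset.univ.filter fun i => φ i = false).card with hc
  show 0 ≤ ∑ φ : Fin n → Bool, (-1 : ℤ) ^ (c φ) • T φ
  -- split the sum according to the value at j
  have split := Finset.sum_filter_add_sum_filter_not Finset.univ
    (fun φ : Fin n → Bool => φ j = true) (fun φ => (-1 : ℤ) ^ (c φ) • T φ)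
  have hupdself : ∀ (φ : Fin n → Bool) (v : Bool), φ j = v → Function.update φ j v = φ := by
    intro φ v h
    funext k
    rcases eq_or_ne k j with rfl | hk
    · simp [h]
    · simp [Function.update_of_ne hk]
  -- reindex the second sum by flipping coordinate j
  have reind : ∑ φ ∈ Finset.univ.filter (fun φ : Fin n → Bool => ¬ φ j = true),
        (-1 : ℤ) ^ (c φ) • T φ
      = ∑ φ ∈ Finset.univ.filter (fun φ : Fin n → Bool => φ j = true),
        (-1 : ℤ) ^ (c (Function.update φ j false)) • T (Function.update φ j false) := by
    refine Finset.sum_nbij' (i := fun φ => Function.update φ j true)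
      (j := fun φ => Function.update φ j false) ?_ ?_ ?_ ?_ ?_
    · intro φ hφ
      simp
    · intro φ hφ
      simp
    · intro φ hφ
      simp only [Finset.mem_filter, Bool.not_eq_true] at hφ
      show Function.update (Function.update φ j true) j false = φ
      rw [Function.update_idem]
      exact hupdself φ false hφ.2
    · intro φ hφ
      simp only [Finset.mem_filter] at hφ
      show Function.update (Function.update φ j false) j true = φ
      rw [Function.update_idem]
      exact hupdself φ true hφ.2
    · intro φ hφ
      simp only [Finset.mem_filter, Bool.not_eq_true] at hφ
      rw [Function.update_idem, hupdself φ false hφ.2]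
  -- per-pair nonnegativity
  have key : ∀ φ : Fin n → Bool, φ j = true →
      0 ≤ (-1 : ℤ) ^ (c φ) • T φ
        + (-1 : ℤ) ^ (c (Function.update φ j false)) • T (Function.update φ j false) := by
    intro φ hφj
    have hcup : c (Function.update φ j false) = c φ + 1 := by
      have hset : (Finset.univ.filter fun i => Function.update φ j false i = false)
          = insert j (Finset.univ.filter fun i => φ i = false) := by
        ext k
        rcases eq_or_ne k j with hkj | hk
        · subst hkj; simp
        · simp [Function.update_of_ne hk, hk]
      have hjnot : j ∉ (Finset.univ.filter fun i => φ i = false) := by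
        simp [hφj]
      show (Finset.univ.filter fun i => Function.update φ j false i = false).card = _
      rw [hset, Finset.card_insert_of_notMem hjnot, add_comm]
    have hsign : ((-1 : ℤ)) ^ (c (Function.update φ j false)) = -(-1 : ℤ) ^ (c φ) := by
      rw [hcup, pow_succ]; ring
    have hmle : T (Function.update φ j false) ≤ T φ := by
      apply Finset.le_inf'
      intro k _
      refine le_trans (Finset.inf'_le _ (Finset.mem_univ k)) ?_
      rcases eq_or_ne k j with hkj | hk
      · subst hkj
        simp only [Function.update_self, hφj, if_true, if_false]
        exact hmono k (hab k)
      · rw [Function.update_of_ne hk]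
    rw [hsign, neg_smul, ← sub_eq_add_neg, ← smul_sub]
    by_cases hall : ∀ i, φ i = true
    · have hc0 : c φ = 0 := by
        show (Finset.univ.filter fun i => φ i = false).card = 0
        rw [Finset.card_eq_zero, Finset.filter_eq_empty_iff]
        intro i _; simp [hall i]
      rw [hc0, pow_zero, one_smul, sub_nonneg]
      exact hmle
    · push_neg at hall
      obtain ⟨i, hi⟩ := hall
      have hif : φ i = false := by simpa [Bool.not_eq_true] using hi
      have hij : i ≠ j := by rintro rfl; rw [hφj] at hif; exact Bool.noConfusion hif
      have heq : T φ = T (Function.update φ j false) := by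
        refine le_antisymm ?_ hmle
        apply Finset.le_inf'
        intro k _
        rcases eq_or_ne k j with hkj | hk
        · subst hkj
          simp only [Function.update_self, if_false]
          calc T φ ≤ f i (if φ i then b i else a i) := Finset.inf'_le _ (Finset.mem_univ i)
            _ = f i (a i) := by rw [hif]; simp
            _ ≤ f k (a k) := hj i (Finset.mem_univ i)
        · rw [Function.update_of_ne hk]
          exact Finset.inf'_le _ (Finset.mem_univ k)
      rw [← heq, sub_self, smul_zero]
  rw [← split, reind, ← Finset.sum_add_distrib]
  apply Finset.sum_nonneg
  intro φ hφ
  exact key φ (by simpa using hφ)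
end

section
/- Let G be a linearly ordered abelian group, u ∈ G with 0 ≤ u, and let f₁, ..., fₙ : ℝ → [0,u] be monotone functions such that f₁(a₁) ≤ f₂(a₂) ≤ ... ≤ fₙ(aₙ) for given reals a_i ≤ b_i. Setting F(s₁,...,sₙ) = ⋀_{i=1}^n f_i(s_i), the full n-fold increment Δ₁(a₁,b₁)···Δₙ(aₙ,bₙ)F equals ⋀_{i=1}^{n-1}(f_i(b_i) ∧ fₙ(bₙ)) − ⋀_{i=1}^{n-1}(f_i(b_i) ∧ fₙ(aₙ)). -/
open Finset

private lemma my_inf'_inf_const {α G : Type*} [SemilatticeInf G] (s : Finset α) (hs : s.Nonempty)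
    (p : α → G) (c : G) : (s.inf' hs fun i => p i ⊓ c) = s.inf' hs p ⊓ c := by
  induction hs using Finset.Nonempty.cons_induction with
  | singleton a => simp
  | cons a s ha hs ih => rw [inf'_cons (H := hs), inf'_cons (H := hs), ih, ← inf_inf_distrib_right]

private lemma my_inf'_split {G : Type*} [SemilatticeInf G] {n : ℕ} (hn : 0 < n)
    (h : Fin (n + 1) → G) :
    univ.inf' univ_nonempty h =
      h (Fin.last n) ⊓ (univ.inf' (univ_nonempty_iff.mpr (Fin.pos_iff_nonempty.mp hn))
        fun i : Fin n => h i.castSucc) := by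
  rw [show (univ : Finset (Fin (n+1))).inf' univ_nonempty h
      = (Finset.cons (Fin.last n) (univ.map Fin.castSuccEmb) (by simp [map_eq_image])).inf'
        (by rw [← Fin.univ_castSuccEmb]; exact univ_nonempty) h from by
        congr 1; exact Fin.univ_castSuccEmb n]
  rw [inf'_cons (H := by simp [map_nonempty, univ_nonempty_iff, ← Fin.pos_iff_nonempty, hn])]
  congr 1
  rw [inf'_map]
  rfl

/-- Let `G` be a linearly ordered abelian group, `0 ≤ u`, and `f₁,…,f_{m+1} : ℝ → [0,u]`
monotone with `f₁(a₁) ≤ ⋯ ≤ f_{m+1}(a_{m+1})`. With `F(s) = ⋀ᵢ fᵢ(sᵢ)`, the full iterated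
increment `Δ₁(a₁,b₁)⋯Δ_{m+1}(a_{m+1},b_{m+1})F` (the alternating sum over the vertices)
equals `⋀_{i≤m}(fᵢ(bᵢ) ⊓ f_{m+1}(b_{m+1})) − ⋀_{i≤m}(fᵢ(bᵢ) ⊓ f_{m+1}(a_{m+1}))`. -/
theorem volume_of_min_eq_inf_sub_inf
    {G : Type*} [AddCommGroup G] [LinearOrder G] [IsOrderedAddMonoid G] {m : ℕ} (hm : 0 < m) (u : G) (hu : (0 : G) ≤ u)
    (f : Fin (m + 1) → ℝ → G) (hmono : ∀ i, Monotone (f i))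
    (hmem : ∀ i t, f i t ∈ Set.Icc (0 : G) u)
    (a b : Fin (m + 1) → ℝ) (hab : ∀ i, a i ≤ b i)
    (hchain : ∀ i j : Fin (m + 1), i ≤ j → f i (a i) ≤ f j (a j)) :
    (∑ φ : Fin (m + 1) → Bool,
      (-1 : ℤ) ^ (Finset.univ.filter fun i => φ i = false).card •
        Finset.univ.inf' Finset.univ_nonempty
          (fun i => f i (if φ i then b i else a i)))
    = Finset.univ.inf' (Finset.univ_nonempty_iff.mpr (Fin.pos_iff_nonempty.mp hm))
        (fun i : Fin m => f i.castSucc (b i.castSucc) ⊓ f (Fin.last m) (b (Fin.last m)))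
      - Finset.univ.inf' (Finset.univ_nonempty_iff.mpr (Fin.pos_iff_nonempty.mp hm))
        (fun i : Fin m => f i.castSucc (b i.castSucc) ⊓ f (Fin.last m) (a (Fin.last m))) := by
  classical
  set L := Fin.last m with hL
  set T : (Fin (m + 1) → Bool) → G := fun φ =>
    univ.inf' univ_nonempty (fun i => f i (if φ i then b i else a i)) with hT
  set sgn : (Fin (m + 1) → Bool) → ℤ :=
    fun φ => (-1 : ℤ) ^ (univ.filter fun i => φ i = false).card with hsgn
  set flp : (Fin (m + 1) → Bool) → (Fin (m + 1) → Bool) :=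
    fun φ => Function.update φ L (!φ L) with hflp
  -- basic facts about flp
  have flp_apply : ∀ φ i, flp φ i = if i = L then !φ L else φ i := by
    intro φ i
    by_cases hi : i = L <;> simp [hflp, Function.update, hi]
  have flp_ne : ∀ φ, flp φ ≠ φ := by
    intro φ h
    have := congrFun h L
    rw [flp_apply] at this
    simp at this
  have flp_flp : ∀ φ, flp (flp φ) = φ := by
    intro φ
    funext i
    rw [flp_apply, flp_apply, flp_apply]
    by_cases hi : i = L <;> simp [hi]
  -- sign flips
  have sgn_flp : ∀ φ, sgn (flp φ) = - sgn φ := by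
    intro φ
    cases hφL : φ L with
    | true =>
      have hfilter : (univ.filter fun i => flp φ i = false)
          = insert L (univ.filter fun i => φ i = false) := by
        ext i
        rw [mem_insert]
        by_cases hi : i = L <;> simp [flp_apply, hi, hφL]
      have hnot : L ∉ (univ.filter fun i => φ i = false) := by simp [hφL]
      rw [hsgn]
      simp only [hfilter, card_insert_of_notMem hnot, pow_succ]
      ring
    | false =>
      have hfilter : (univ.filter fun i => flp φ i = false)
          = (univ.filter fun i => φ i = false).erase L := by
        ext i
        rw [mem_erase]
        by_cases hi : i = L <;> simp [flp_apply, hi, hφL]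
      have hmemL : L ∈ (univ.filter fun i => φ i = false) := by simp [hφL]
      have hcard : (univ.filter fun i => φ i = false).card
          = ((univ.filter fun i => φ i = false).erase L).card + 1 :=
        (card_erase_add_one hmemL).symm
      rw [hsgn]
      simp only [hfilter, hcard, pow_succ]
      ring
  -- chain facts
  have hchain' : ∀ i j : Fin (m + 1), i ≤ j → ∀ t, a j ≤ t → f i (a i) ≤ f j t := by
    intro i j hij t ht
    exact (hchain i j hij).trans (hmono j ht)
  -- value is invariant under flp when some non-last coordinate is false
  have T_flp : ∀ φ : Fin (m + 1) → Bool, (∃ i, i ≠ L ∧ φ i = false) → T (flp φ) = T φ := by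
    rintro φ ⟨j, hjL, hj⟩
    have hc : ∀ ψ : Fin (m + 1) → Bool, ψ j = false →
        T ψ = univ.inf' univ_nonempty
          (fun i => f i (if ψ i then b i else a i) ⊓ f j (a j)) := by
      intro ψ hψ
      rw [my_inf'_inf_const]
      refine (inf_eq_left.mpr ?_).symm
      calc univ.inf' univ_nonempty (fun i => f i (if ψ i then b i else a i))
          ≤ f j (if ψ j then b j else a j) := inf'_le _ (mem_univ j)
        _ = f j (a j) := by rw [hψ]; rfl
    have hflpj : flp φ j = false := by rw [flp_apply]; simp [hjL, hj]
    rw [hc _ hflpj, hc _ hj]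
    refine inf'_congr _ rfl ?_
    intro i _
    by_cases hi : i = L
    · subst hi
      have h1 : f j (a j) ≤ f L (a L) := hchain j L (Fin.le_last j)
      have h2 : f j (a j) ≤ f L (b L) := hchain' j L (Fin.le_last j) _ (hab L)
      rw [flp_apply]
      simp only [if_pos rfl]
      cases hφL : φ L <;> simp [inf_eq_right.mpr h1, inf_eq_right.mpr h2]
    · rw [flp_apply, if_neg hi]
  -- split the sum according to P
  set P : (Fin (m + 1) → Bool) → Prop := fun φ => ∀ i, i ≠ L → φ i = true with hP
  have notP_iff : ∀ φ : Fin (m + 1) → Bool, ¬ P φ → ∃ i, i ≠ L ∧ φ i = false := by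
    intro φ h
    simp only [hP] at h
    push_neg at h
    obtain ⟨i, hi1, hi2⟩ := h
    exact ⟨i, hi1, by cases hc : φ i <;> simp [hc] at hi2 ⊢⟩
  have hsum : (∑ φ : Fin (m + 1) → Bool, sgn φ • T φ)
      = (∑ φ ∈ univ.filter P, sgn φ • T φ) + ∑ φ ∈ univ.filter (fun φ => ¬ P φ), sgn φ • T φ :=
    (sum_filter_add_sum_filter_not univ P _).symm
  have hzero : (∑ φ ∈ univ.filter (fun φ => ¬ P φ), sgn φ • T φ) = 0 := by
    refine sum_involution (fun φ _ => flp φ) ?_ ?_ ?_ ?_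
    · intro φ hφ
      obtain ⟨j, hjL, hj'⟩ := notP_iff φ (mem_filter.mp hφ).2
      rw [T_flp φ ⟨j, hjL, hj'⟩, sgn_flp]
      rw [neg_smul]
      abel
    · intro φ _ _
      exact flp_ne φ
    · intro φ hφ
      obtain ⟨j, hjL, hj⟩ := notP_iff φ (mem_filter.mp hφ).2
      refine mem_filter.mpr ⟨mem_univ _, fun hPf => ?_⟩
      have hPf' := hPf j hjL
      simp only [flp_apply, hjL, if_false, hj] at hPf'
      exact Bool.false_ne_true hPf'
    · intro φ _
      exact flp_flp φ
  -- the filtered set has exactly two elements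
  set φT : Fin (m + 1) → Bool := fun _ => true with hφT
  set φF : Fin (m + 1) → Bool := Function.update φT L false with hφF
  have φF_apply : ∀ i, φF i = if i = L then false else true := by
    intro i
    by_cases hi : i = L <;> simp [hφF, Function.update, hi, hφT]
  have hTF : φT ≠ φF := by
    intro h
    have := congrFun h L
    rw [φF_apply, if_pos rfl] at this
    simp [hφT] at this
  have hPset : univ.filter P = {φT, φF} := by
    ext φ
    simp only [mem_filter, mem_univ, true_and, mem_insert, mem_singleton]
    constructor
    · intro hφ
      cases hφL : φ L with
      | true =>
        left; funext i
        by_cases hi : i = L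
        · rw [hi, hφL]
        · rw [hφ i hi]
      | false =>
        right; funext i
        rw [φF_apply]
        by_cases hi : i = L
        · rw [hi, hφL, if_pos rfl]
        · rw [hφ i hi, if_neg hi]
    · rintro (rfl | rfl)
      · intro i _; rfl
      · intro i hi; rw [φF_apply, if_neg hi]
  -- compute the two remaining terms
  have sgn_T : sgn φT = 1 := by
    simp only [hsgn]
    have : (univ.filter fun i => φT i = false) = ∅ := by
      ext i; simp [hφT]
    rw [this]; simp
  have sgn_F : sgn φF = -1 := by
    simp only [hsgn]
    have : (univ.filter fun i => φF i = false) = {L} := by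
      ext i
      by_cases hi : i = L <;> simp [φF_apply, hi]
    rw [this]; simp
  set Im : G := univ.inf' (univ_nonempty_iff.mpr (Fin.pos_iff_nonempty.mp hm))
    (fun i : Fin m => f i.castSucc (b i.castSucc)) with hIm
  have T_T : T φT = f L (b L) ⊓ Im := by
    simp only [hT]
    simp only [hφT, if_true]
    rw [my_inf'_split hm (fun i => f i (b i))]
  have T_F : T φF = f L (a L) ⊓ Im := by
    simp only [hT]
    have hfun : (fun i => f i (if φF i then b i else a i))
        = fun i => f i (if i = L then a i else b i) := by
      funext i
      rw [φF_apply]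
      by_cases hi : i = L <;> simp [hi]
    rw [hfun, my_inf'_split hm (fun i => f i (if i = L then a i else b i))]
    rw [if_pos rfl]
    congr 1
    refine inf'_congr _ rfl ?_
    intro i _
    have hne : (i.castSucc : Fin (m + 1)) ≠ L := (Fin.castSucc_lt_last i).ne
    rw [if_neg hne]
  have key : (∑ φ : Fin (m + 1) → Bool, sgn φ • T φ)
      = (Im ⊓ f L (b L)) - (Im ⊓ f L (a L)) := by
    rw [hsum, hzero, add_zero, hPset, sum_pair hTF, sgn_T, sgn_F, T_T, T_F, one_smul,
      neg_one_zsmul, inf_comm (f L (b L)) Im, inf_comm (f L (a L)) Im, sub_eq_add_neg]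
  have step1 : (∑ φ : Fin (m + 1) → Bool,
      (-1 : ℤ) ^ (Finset.univ.filter fun i => φ i = false).card •
        Finset.univ.inf' Finset.univ_nonempty
          (fun i => f i (if φ i then b i else a i)))
      = ∑ φ : Fin (m + 1) → Bool, sgn φ • T φ := by
    simp only [hsgn, hT]
  have hRHS1 : univ.inf' (univ_nonempty_iff.mpr (Fin.pos_iff_nonempty.mp hm))
      (fun i : Fin m => f i.castSucc (b i.castSucc) ⊓ f L (b L)) = Im ⊓ f L (b L) := by
    rw [hIm]; exact my_inf'_inf_const _ _ _ _
  have hRHS2 : univ.inf' (univ_nonempty_iff.mpr (Fin.pos_iff_nonempty.mp hm))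
      (fun i : Fin m => f i.castSucc (b i.castSucc) ⊓ f L (a L)) = Im ⊓ f L (a L) := by
    rw [hIm]; exact my_inf'_inf_const _ _ _ _
  rw [step1, key, hRHS1, hRHS2]
end

section
/- Let F be an n-dimensional spectral resolution on Γ(H,v) for a unital Dedekind monotone σ-complete po-group (H,v). Then for any distinct indices i₁,...,i_k ∈ {1,...,n} with 1 ≤ k < n and all reals a_{i_j} ≤ b_{i_j}, the partial iterated increments satisfy 0 ≤ Δ_{i₁}(a_{i₁},b_{i₁})···Δ_{i_k}(a_{i_k},b_{i_k})F(s₁,...,sₙ) ≤ v. -/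
variable {G : Type*} [AddCommGroup G] [PartialOrder G] [IsOrderedAddMonoid G]

/-- The difference operator `Δᵢ(a,b)H(s) = H(…,b,…) − H(…,a,…)` (substitution in the
`i`-th coordinate). -/
def delta {n : ℕ} (i : Fin n) (a b : ℝ) (H : (Fin n → ℝ) → G) : (Fin n → ℝ) → G :=
  fun s => H (Function.update s i b) - H (Function.update s i a)

/-- Iterated difference operators `Δ_{i₁}(a_{i₁},b_{i₁}) ⋯ Δ_{i_k}(a_{i_k},b_{i_k})`
for a list of indices `[i₁, …, i_k]`. -/
def deltaList {n : ℕ} (a b : Fin n → ℝ) : List (Fin n) → ((Fin n → ℝ) → G) → (Fin n → ℝ) → G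
  | [], H => H
  | i :: l, H => delta i (a i) (b i) (deltaList a b l H)

/-- `G` is Dedekind monotone σ-complete: every bounded monotone sequence has a
supremum. -/
def MonotoneSigmaComplete (G : Type*) [Preorder G] : Prop :=
  ∀ f : ℕ → G, Monotone f → BddAbove (Set.range f) → ∃ s, IsLUB (Set.range f) s

/-- `v` is a strong unit of `G`. -/
def IsStrongUnit (v : G) : Prop := ∀ g : G, ∃ k : ℕ, g ≤ k • v

/-- An `n`-dimensional spectral resolution on `Γ(G,v) = [0,v]`: monotone, with
supremum `v`, left-continuous, infimum `0` in each coordinate, and with nonnegative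
volumes. -/
def IsSpectralResolution {n : ℕ} (v : G) (F : (Fin n → ℝ) → G) : Prop :=
  (∀ s, F s ∈ Set.Icc (0 : G) v) ∧
  Monotone F ∧
  IsLUB (Set.range F) v ∧
  (∀ t : Fin n → ℝ, IsLUB (F '' {s | ∀ i, s i < t i}) (F t)) ∧
  (∀ (i : Fin n) (s : Fin n → ℝ), IsGLB (Set.range fun r => F (Function.update s i r)) 0) ∧
  (∀ a b : Fin n → ℝ, (∀ i, a i ≤ b i) → ∀ s,
    0 ≤ deltaList a b (List.ofFn (id : Fin n → Fin n)) F s)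

namespace SRAux

variable {n : ℕ}

lemma update_le_update (s : Fin n → ℝ) (j : Fin n) {r t : ℝ} (h : r ≤ t) :
    Function.update s j r ≤ Function.update s j t := by
  intro k
  rcases eq_or_ne k j with rfl | hk
  · simpa using h
  · simp [Function.update_of_ne hk]

lemma update_mono_base {s s' : Fin n → ℝ} (h : s ≤ s') (j : Fin n) (c : ℝ) :
    Function.update s j c ≤ Function.update s' j c := by
  intro k
  rcases eq_or_ne k j with rfl | hk
  · simp
  · simpa [Function.update_of_ne hk] using h k

lemma deltaList_congr (a b a' b' : Fin n → ℝ) (l : List (Fin n))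
    (ha : ∀ i ∈ l, a i = a' i) (hb : ∀ i ∈ l, b i = b' i) (F : (Fin n → ℝ) → G) :
    deltaList a b l F = deltaList a' b' l F := by
  induction l with
  | nil => rfl
  | cons i l ih =>
    simp only [deltaList,
      ih (fun i hi => ha i (List.mem_cons_of_mem _ hi)) (fun i hi => hb i (List.mem_cons_of_mem _ hi)),
      ha i (List.mem_cons_self), hb i (List.mem_cons_self)]

lemma delta_comm (i j : Fin n) (ai bi aj bj : ℝ) (F : (Fin n → ℝ) → G) :
    delta i ai bi (delta j aj bj F) = delta j aj bj (delta i ai bi F) := by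
  funext s
  rcases eq_or_ne i j with rfl | h
  · simp only [delta, Function.update_idem]
    abel
  · simp only [delta]
    rw [Function.update_comm h bi bj s, Function.update_comm h ai bj s,
      Function.update_comm h bi aj s, Function.update_comm h ai aj s]
    abel

lemma deltaList_perm (a b : Fin n → ℝ) {l l' : List (Fin n)} (h : l.Perm l')
    (F : (Fin n → ℝ) → G) : deltaList a b l F = deltaList a b l' F := by
  induction h with
  | nil => rfl
  | cons x _ ih => simp only [deltaList, ih]
  | swap x y l => simp only [deltaList, delta_comm]
  | trans _ _ ih1 ih2 => rw [ih1, ih2]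

/-- positive / negative parts of the expansion of `deltaList` -/
def deltaPN (a b : Fin n → ℝ) : List (Fin n) → ((Fin n → ℝ) → G) → (Fin n → ℝ) → G × G
  | [], F => fun s => (F s, 0)
  | i :: l, F => fun s =>
      ((deltaPN a b l F (Function.update s i (b i))).1 + (deltaPN a b l F (Function.update s i (a i))).2,
       (deltaPN a b l F (Function.update s i (b i))).2 + (deltaPN a b l F (Function.update s i (a i))).1)

lemma deltaList_eq_PN (a b : Fin n → ℝ) (l : List (Fin n)) (F : (Fin n → ℝ) → G) (s : Fin n → ℝ) :
    deltaList a b l F s = (deltaPN a b l F s).1 - (deltaPN a b l F s).2 := by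
  induction l generalizing s with
  | nil => simp [deltaList, deltaPN]
  | cons i l ih =>
    simp only [deltaList, delta, deltaPN, ih]
    abel

lemma deltaPN_mono (a b : Fin n → ℝ) (l : List (Fin n)) {F : (Fin n → ℝ) → G}
    (hF : Monotone F) :
    Monotone (fun s => (deltaPN a b l F s).1) ∧ Monotone (fun s => (deltaPN a b l F s).2) := by
  induction l with
  | nil => exact ⟨hF, monotone_const⟩
  | cons i l ih =>
    refine ⟨fun s s' hs => add_le_add (ih.1 (update_mono_base hs _ _)) (ih.2 (update_mono_base hs _ _)),
      fun s s' hs => add_le_add (ih.2 (update_mono_base hs _ _)) (ih.1 (update_mono_base hs _ _))⟩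

lemma isGLB_add {f g : ℝ → G} (hf : Monotone f) (hg : Monotone g)
    (h1 : IsGLB (Set.range f) 0) (h2 : IsGLB (Set.range g) 0) :
    IsGLB (Set.range fun r => f r + g r) 0 := by
  constructor
  · rintro _ ⟨r, rfl⟩
    have hfr : (0 : G) ≤ f r := h1.1 ⟨r, rfl⟩
    have hgr : (0 : G) ≤ g r := h2.1 ⟨r, rfl⟩
    simpa using add_le_add hfr hgr
  · intro c hc
    -- c ≤ f r + g r for all r
    have key : ∀ t, c - g t ≤ (0 : G) := by
      intro t
      have : c - g t ∈ lowerBounds (Set.range f) := by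
        rintro _ ⟨r, rfl⟩
        have h3 : c ≤ f (min r t) + g (min r t) := hc ⟨min r t, rfl⟩
        have h4 : f (min r t) ≤ f r := hf (min_le_left r t)
        have h5 : g (min r t) ≤ g t := hg (min_le_right r t)
        have : c ≤ f r + g t := h3.trans (add_le_add h4 h5)
        exact sub_le_iff_le_add'.mpr (this.trans_eq (add_comm _ _))
      exact h1.2 this
    have : c ∈ lowerBounds (Set.range g) := by
      rintro _ ⟨t, rfl⟩
      have := key t
      simpa [sub_nonpos] using this
    simpa using h2.2 this

lemma deltaPN_glb (a b : Fin n → ℝ) (l : List (Fin n)) {F : (Fin n → ℝ) → G}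
    (hF : Monotone F)
    (hglb : ∀ (i : Fin n) (s : Fin n → ℝ), IsGLB (Set.range fun r => F (Function.update s i r)) 0)
    {j : Fin n} (hj : j ∉ l) (s : Fin n → ℝ) :
    IsGLB (Set.range fun r => (deltaPN a b l F (Function.update s j r)).1) 0 ∧
    IsGLB (Set.range fun r => (deltaPN a b l F (Function.update s j r)).2) 0 := by
  induction l generalizing s with
  | nil =>
    refine ⟨hglb j s, ?_⟩
    have : (Set.range fun r : ℝ => ((0:G))) = {0} := Set.range_const
    simpa [deltaPN, this] using isGLB_singleton
  | cons i l ih =>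
    have hji : j ≠ i := fun h => hj (h ▸ List.mem_cons_self)
    have hjl : j ∉ l := fun h => hj (List.mem_cons_of_mem _ h)
    have hcomm : ∀ (r c : ℝ), Function.update (Function.update s j r) i c
        = Function.update (Function.update s i c) j r := fun r c =>
      Function.update_comm hji r c s
    have ihb := ih hjl (Function.update s i (b i))
    have iha := ih hjl (Function.update s i (a i))
    have hm := deltaPN_mono a b l (F := F) hF
    have mono1b : Monotone fun r => (deltaPN a b l F (Function.update (Function.update s i (b i)) j r)).1 :=
      fun r t hrt => hm.1 (update_le_update _ j hrt)
    have mono2b : Monotone fun r => (deltaPN a b l F (Function.update (Function.update s i (b i)) j r)).2 :=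
      fun r t hrt => hm.2 (update_le_update _ j hrt)
    have mono1a : Monotone fun r => (deltaPN a b l F (Function.update (Function.update s i (a i)) j r)).1 :=
      fun r t hrt => hm.1 (update_le_update _ j hrt)
    have mono2a : Monotone fun r => (deltaPN a b l F (Function.update (Function.update s i (a i)) j r)).2 :=
      fun r t hrt => hm.2 (update_le_update _ j hrt)
    constructor
    · simp only [deltaPN, hcomm]
      exact isGLB_add mono1b mono2a ihb.1 iha.2
    · simp only [deltaPN, hcomm]
      exact isGLB_add mono2b mono1a ihb.2 iha.1

/-- Peeling lemma: if all increments over `j :: l` are nonnegative (for all bounds),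
and the coordinate infima of `F` are `0`, then increments over `l` are nonnegative. -/
lemma peel (l : List (Fin n)) {F : (Fin n → ℝ) → G} (hF : Monotone F)
    (hglb : ∀ (i : Fin n) (s : Fin n → ℝ), IsGLB (Set.range fun r => F (Function.update s i r)) 0)
    {j : Fin n} (hj : j ∉ l)
    (hNN : ∀ a b : Fin n → ℝ, (∀ i, a i ≤ b i) → ∀ s, 0 ≤ deltaList a b (j :: l) F s)
    (a b : Fin n → ℝ) (hab : ∀ i, a i ≤ b i) (s : Fin n → ℝ) :
    0 ≤ deltaList a b l F s := by
  -- monotonicity in the extra coordinate j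
  have hg : ∀ r t : ℝ, r ≤ t →
      deltaList a b l F (Function.update s j r) ≤ deltaList a b l F (Function.update s j t) := by
    intro r t hrt
    have habs : ∀ i, Function.update a j r i ≤ Function.update b j t i := by
      intro i
      rcases eq_or_ne i j with rfl | hi
      · simpa using hrt
      · simpa [Function.update_of_ne hi] using hab i
    have h0 := hNN (Function.update a j r) (Function.update b j t) habs s
    have hcongr : deltaList (Function.update a j r) (Function.update b j t) l F
        = deltaList a b l F := by
      refine deltaList_congr _ _ _ _ l ?_ ?_ F
      · intro i hi
        have hij : i ≠ j := by rintro rfl; exact hj hi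
        exact (Function.update_of_ne hij r a)
      · intro i hi
        have hij : i ≠ j := by rintro rfl; exact hj hi
        exact (Function.update_of_ne hij t b)
    simp only [deltaList, delta, Function.update_self, hcongr] at h0
    exact sub_nonneg.mp h0
  have hPN := deltaPN_glb a b l (F := F) hF hglb hj s
  have hm := deltaPN_mono a b l (F := F) hF
  -- -(deltaList a b l F s) is a lower bound of r ↦ (deltaPN … (update s j r)).2
  have hlb : -(deltaList a b l F s) ∈
      lowerBounds (Set.range fun r => (deltaPN a b l F (Function.update s j r)).2) := by
    rintro _ ⟨r, rfl⟩
    set r' := min r (s j) with hr'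
    have h1 : deltaList a b l F (Function.update s j r') ≤ deltaList a b l F s := by
      have := hg r' (s j) (min_le_right r (s j))
      rwa [Function.update_eq_self j s] at this
    have h2 : -((deltaPN a b l F (Function.update s j r')).2)
        ≤ deltaList a b l F (Function.update s j r') := by
      rw [deltaList_eq_PN]
      have hpos : (0 : G) ≤ (deltaPN a b l F (Function.update s j r')).1 :=
        hPN.1.1 ⟨r', rfl⟩
      have := sub_le_sub_right hpos ((deltaPN a b l F (Function.update s j r')).2)
      simpa using this
    have h3 : (deltaPN a b l F (Function.update s j r')).2
        ≤ (deltaPN a b l F (Function.update s j r)).2 :=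
      hm.2 (update_le_update s j (min_le_left r (s j)))
    exact neg_le.mp (((neg_le_neg h3).trans h2).trans h1)
  have := hPN.2.2 hlb
  simpa using neg_nonpos.mp this

lemma claim_nonneg {F : (Fin n → ℝ) → G} (hF : Monotone F)
    (hglb : ∀ (i : Fin n) (s : Fin n → ℝ), IsGLB (Set.range fun r => F (Function.update s i r)) 0)
    (hvol : ∀ a b : Fin n → ℝ, (∀ i, a i ≤ b i) → ∀ s,
      0 ≤ deltaList a b (List.ofFn (id : Fin n → Fin n)) F s) :
    ∀ (k : ℕ) (l : List (Fin n)), l.Nodup → n - l.length = k →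
      ∀ a b : Fin n → ℝ, (∀ i, a i ≤ b i) → ∀ s, 0 ≤ deltaList a b l F s := by
  intro k
  induction k with
  | zero =>
    intro l hnd hk a b hab s
    have hlen : l.length = n := by
      have h1 : l.length ≤ n := by
        simpa using hnd.length_le_card
      omega
    have hsub : l.Subperm (List.ofFn (id : Fin n → Fin n)) :=
      List.subperm_of_subset hnd (fun i _ => by simp [List.mem_ofFn])
    have hperm : l.Perm (List.ofFn (id : Fin n → Fin n)) :=
      hsub.perm_of_length_le (by simp [hlen])
    rw [deltaList_perm a b hperm F]
    exact hvol a b hab s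
  | succ k ih =>
    intro l hnd hk a b hab s
    have hlen : l.length < n := by omega
    -- find j ∉ l
    have hex : ∃ j : Fin n, j ∉ l := by
      by_contra h
      push_neg at h
      have hsub : (List.ofFn (id : Fin n → Fin n)).Subperm l :=
        List.subperm_of_subset ((List.nodup_ofFn).mpr Function.injective_id) (fun i _ => h i)
      have := hsub.length_le
      simp at this
      omega
    obtain ⟨j, hj⟩ := hex
    have hnd' : (j :: l).Nodup := List.nodup_cons.mpr ⟨hj, hnd⟩
    have hNN := ih (j :: l) hnd' (by simp; omega)
    exact peel l hF hglb hj hNN a b hab s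

lemma claim_le {F : (Fin n → ℝ) → G} {v : G} (hF : Monotone F)
    (hIcc : ∀ s, F s ∈ Set.Icc (0 : G) v)
    (hglb : ∀ (i : Fin n) (s : Fin n → ℝ), IsGLB (Set.range fun r => F (Function.update s i r)) 0)
    (hvol : ∀ a b : Fin n → ℝ, (∀ i, a i ≤ b i) → ∀ s,
      0 ≤ deltaList a b (List.ofFn (id : Fin n → Fin n)) F s)
    (l : List (Fin n)) (hnd : l.Nodup)
    (a b : Fin n → ℝ) (hab : ∀ i, a i ≤ b i) (s : Fin n → ℝ) :
    deltaList a b l F s ≤ v := by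
  induction l generalizing s with
  | nil => exact (hIcc s).2
  | cons i l ih =>
    have hnd' : l.Nodup := (List.nodup_cons.mp hnd).2
    have h0 : 0 ≤ deltaList a b l F (Function.update s i (a i)) :=
      claim_nonneg hF hglb hvol (n - l.length) l hnd' rfl a b hab _
    have h1 : deltaList a b l F (Function.update s i (b i)) ≤ v := ih hnd' _
    calc deltaList a b (i :: l) F s
        = deltaList a b l F (Function.update s i (b i))
          - deltaList a b l F (Function.update s i (a i)) := rfl
      _ ≤ deltaList a b l F (Function.update s i (b i)) := sub_le_self _ h0
      _ ≤ v := h1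

end SRAux


/-- For an `n`-dimensional spectral resolution `F` on `Γ(H,v)` and distinct indices
`i₁,…,i_k` with `1 ≤ k < n`, the partial iterated increments satisfy
`0 ≤ Δ_{i₁}(a_{i₁},b_{i₁})⋯Δ_{i_k}(a_{i_k},b_{i_k})F(s) ≤ v`. -/
theorem spectral_resolution_partial_increments_mem_Icc {n : ℕ} {H : Type*}
    [AddCommGroup H] [PartialOrder H] [IsOrderedAddMonoid H]
    (hσc : MonotoneSigmaComplete H) (v : H) (hv : IsStrongUnit v)
    (F : (Fin n → ℝ) → H) (hF : IsSpectralResolution v F)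
    (l : List (Fin n)) (hnd : l.Nodup) (hne : l ≠ []) (hlt : l.length < n)
    (a b : Fin n → ℝ) (hab : ∀ i, a i ≤ b i) (s : Fin n → ℝ) :
    deltaList a b l F s ∈ Set.Icc (0 : H) v := by
  obtain ⟨hIcc, hmono, _hsup, _hleft, hglb, hvol⟩ := hF
  exact ⟨SRAux.claim_nonneg hmono hglb hvol (n - l.length) l hnd rfl a b hab s,
    SRAux.claim_le hmono hIcc hglb hvol l hnd a b hab s⟩
end

section
/- Let C be a cuboid in ℝⁿ, α a vertex of C, L a map defined on the vertices of C except α with values in an abelian po-group G, extended to L' by L'(α) = g. If α is of odd order in C, then the volume |C|_{L'} ≥ 0 holds iff |α − C|_L ≤ g; if α is of even order, then |C|_{L'} ≥ 0 holds iff g ≤ |α + C|_L. -/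
/-- A cuboid in `ℝⁿ`, determined by reals `lo i ≤ hi i`; its dimension set is
`{i | lo i < hi i}` and its vertices are the tuples with `i`-th coordinate in
`{lo i, hi i}`. -/
structure Cuboid (n : ℕ) where
  lo : Fin n → ℝ
  hi : Fin n → ℝ
  lo_le_hi : ∀ i, lo i ≤ hi i

namespace Cuboid

variable {n : ℕ}

/-- `i ∈ Dim(C)`. -/
def IsDim (C : Cuboid n) (i : Fin n) : Prop := C.lo i < C.hi i

/-- The admissible vertex selectors: on degenerate coordinates we take the (unique)
upper value. `φ i = true` selects `hi i`, `φ i = false` selects `lo i`. -/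
def Allowed (C : Cuboid n) (φ : Fin n → Bool) : Prop := ∀ i, ¬C.IsDim i → φ i = true

/-- The vertex of `C` selected by `φ`. -/
def vertex (C : Cuboid n) (φ : Fin n → Bool) : Fin n → ℝ :=
  fun i => if φ i then C.hi i else C.lo i

/-- The set of vertices of `C`, as points of `ℝⁿ`. -/
def vertexSet (C : Cuboid n) : Set (Fin n → ℝ) :=
  {p | ∃ φ, C.Allowed φ ∧ p = C.vertex φ}

/-- The upper facet `∂ᵢ(C)` (coordinate `i` fixed at `hi i`). -/
def upperFacet (C : Cuboid n) (i : Fin n) : Cuboid n :=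
  ⟨Function.update C.lo i (C.hi i), C.hi, fun j => by
    rcases eq_or_ne j i with h | h
    · subst h; simp
    · simpa [Function.update_of_ne h] using C.lo_le_hi j⟩

/-- The lower facet `∂'ᵢ(C)` (coordinate `i` fixed at `lo i`). -/
def lowerFacet (C : Cuboid n) (i : Fin n) : Cuboid n :=
  ⟨C.lo, Function.update C.hi i (C.lo i), fun j => by
    rcases eq_or_ne j i with h | h
    · subst h; simp
    · simpa [Function.update_of_ne h] using C.lo_le_hi j⟩

/-- The degenerate cuboid consisting of the single point `p`. -/
def pt (p : Fin n → ℝ) : Cuboid n := ⟨p, p, fun _ => le_rfl⟩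

open scoped Classical in
/-- The finite set of admissible vertex selectors of `C`. -/
noncomputable def allowedSet (C : Cuboid n) : Finset (Fin n → Bool) :=
  Finset.univ.filter fun φ => C.Allowed φ

/-- The number of lower coordinates chosen by `φ`; the order of the corresponding
vertex is `lowerCount φ + 1`. -/
def lowerCount {n : ℕ} (φ : Fin n → Bool) : ℕ :=
  (Finset.univ.filter fun i => φ i = false).card

/-- The "volume" `|C|_f = Σ_α (−1)^{ord_C(α)+1} f(α)` over the vertices of `C`. -/
noncomputable def vol {G : Type*} [AddCommGroup G] (C : Cuboid n)
    (f : (Fin n → ℝ) → G) : G :=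
  ∑ φ ∈ C.allowedSet, (-1 : ℤ) ^ lowerCount φ • f (C.vertex φ)

/-- The vertex expansion of `C` with the vertex selected by `φ₀` omitted. -/
noncomputable def volExcept {G : Type*} [AddCommGroup G] (C : Cuboid n)
    (φ₀ : Fin n → Bool) (f : (Fin n → ℝ) → G) : G :=
  ∑ φ ∈ C.allowedSet.erase φ₀, (-1 : ℤ) ^ lowerCount φ • f (C.vertex φ)

end Cuboid

open Cuboid in
/-- Let `C` be a cuboid, `α = vertex φ₀` one of its vertices, `L` a map into a
po-group `G`, and `L'` the extension with `L'(α) = g`. If `α` is of odd order then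
`|C|_{L'} ≥ 0` iff `|α − C|_L ≤ g`; if `α` is of even order then `|C|_{L'} ≥ 0` iff
`g ≤ |α + C|_L`. -/
theorem volume_condition_iff_bound {n : ℕ} {G : Type*} [AddCommGroup G] [PartialOrder G] [IsOrderedAddMonoid G]
    (C : Cuboid n) (φ₀ : Fin n → Bool) (hφ₀ : C.Allowed φ₀)
    (L : (Fin n → ℝ) → G) (g : G) :
    (Odd (lowerCount φ₀ + 1) →
      (0 ≤ C.vol (fun p => if p = C.vertex φ₀ then g else L p) ↔
        -(C.volExcept φ₀ L) ≤ g)) ∧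
    (Even (lowerCount φ₀ + 1) →
      (0 ≤ C.vol (fun p => if p = C.vertex φ₀ then g else L p) ↔
        g ≤ C.volExcept φ₀ L)) := by
  classical
  have hinj : ∀ ψ, C.Allowed ψ → C.vertex ψ = C.vertex φ₀ → ψ = φ₀ := by
    intro ψ hψ h
    funext i
    by_cases hd : C.IsDim i
    · have := congrFun h i
      unfold Cuboid.vertex at this
      cases hφ : φ₀ i <;> cases hψi : ψ i <;> simp [hφ, hψi] at this ⊢
      · exact absurd this.symm (ne_of_lt hd)
      · exact absurd this (ne_of_lt hd)
    · rw [hψ i hd, hφ₀ i hd]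
  have hmem : φ₀ ∈ C.allowedSet := by
    simp [Cuboid.allowedSet, hφ₀]
  have hvol : C.vol (fun p => if p = C.vertex φ₀ then g else L p)
      = (-1 : ℤ) ^ lowerCount φ₀ • g + C.volExcept φ₀ L := by
    unfold Cuboid.vol Cuboid.volExcept
    rw [← Finset.add_sum_erase _ _ hmem]
    congr 1
    · simp
    · apply Finset.sum_congr rfl
      intro ψ hψ
      have hψne : ψ ≠ φ₀ := (Finset.mem_erase.1 hψ).1
      have hψa : C.Allowed ψ := by
        have := (Finset.mem_erase.1 hψ).2
        simpa [Cuboid.allowedSet] using this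
      have : C.vertex ψ ≠ C.vertex φ₀ := fun h => hψne (hinj ψ hψa h)
      simp [this]
  constructor
  · intro hodd
    have hk : Even (lowerCount φ₀) := by
      rcases hodd with ⟨m, hm⟩
      exact ⟨m, by omega⟩
    rw [hvol, Even.neg_one_pow hk, one_smul]
    rw [add_comm, ← neg_le_iff_add_nonneg]; exact neg_le
  · intro heven
    have hk : Odd (lowerCount φ₀) := by
      rcases heven with ⟨m, hm⟩
      exact ⟨m - 1, by omega⟩
    rw [hvol, Odd.neg_one_pow hk, neg_smul, one_smul]
    rw [neg_add_eq_sub, sub_nonneg]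
end

section
/- Let C be a d-cuboid in ℝⁿ with top vertex α (all coordinates at their upper value), and let L be a partial lift defined on the vertices C \ {α} with values in Γ(G,u) satisfying all volume conditions for faces contained in C \ {α}. Then |α − C|_L ≥ 0, i.e., L(α') summed with appropriate alternating signs over the remaining vertices α' of C (with sign (−1)^{ord_C(α')}) is ≥ 0. -/
namespace Cuboid

variable {n : ℕ}

lemma mem_allowedSet {C : Cuboid n} {φ : Fin n → Bool} :
    φ ∈ C.allowedSet ↔ C.Allowed φ := by
  classical
  simp [allowedSet]

lemma isDim_upperFacet {C : Cuboid n} {i j : Fin n} :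
    (C.upperFacet i).IsDim j ↔ C.IsDim j ∧ j ≠ i := by
  unfold IsDim upperFacet
  rcases eq_or_ne j i with rfl | h
  · simp
  · simp [Function.update_of_ne h, h]

lemma isDim_lowerFacet {C : Cuboid n} {i j : Fin n} :
    (C.lowerFacet i).IsDim j ↔ C.IsDim j ∧ j ≠ i := by
  unfold IsDim lowerFacet
  rcases eq_or_ne j i with rfl | h
  · simp
  · simp [Function.update_of_ne h, h]

lemma allowed_upperFacet {C : Cuboid n} {i : Fin n} (hi : C.IsDim i)
    {φ : Fin n → Bool} :
    (C.upperFacet i).Allowed φ ↔ C.Allowed φ ∧ φ i = true := by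
  constructor
  · intro h
    refine ⟨fun j hj => h j ?_, h i ?_⟩
    · rw [isDim_upperFacet]; tauto
    · rw [isDim_upperFacet]; tauto
  · rintro ⟨h1, h2⟩ j hj
    rw [isDim_upperFacet] at hj
    push_neg at hj
    rcases eq_or_ne j i with rfl | hne
    · exact h2
    · exact h1 j (fun hd => hne (hj hd))

lemma allowed_lowerFacet {C : Cuboid n} {i : Fin n} (hi : C.IsDim i)
    {φ : Fin n → Bool} :
    (C.lowerFacet i).Allowed φ ↔ C.Allowed φ ∧ φ i = true := by
  constructor
  · intro h
    refine ⟨fun j hj => h j ?_, h i ?_⟩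
    · rw [isDim_lowerFacet]; tauto
    · rw [isDim_lowerFacet]; tauto
  · rintro ⟨h1, h2⟩ j hj
    rw [isDim_lowerFacet] at hj
    push_neg at hj
    rcases eq_or_ne j i with rfl | hne
    · exact h2
    · exact h1 j (fun hd => hne (hj hd))

lemma vertex_upperFacet {C : Cuboid n} {i : Fin n} {φ : Fin n → Bool}
    (h : φ i = true) : (C.upperFacet i).vertex φ = C.vertex φ := by
  funext j
  unfold vertex upperFacet
  rcases eq_or_ne j i with rfl | hne
  · simp [h]
  · simp [Function.update_of_ne hne]

lemma vertex_lowerFacet {C : Cuboid n} {i : Fin n} {φ : Fin n → Bool}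
    (h : φ i = true) :
    (C.lowerFacet i).vertex φ = C.vertex (Function.update φ i false) := by
  funext j
  unfold vertex lowerFacet
  rcases eq_or_ne j i with rfl | hne
  · simp [h]
  · simp [Function.update_of_ne hne]

lemma lowerCount_update_false {φ : Fin n → Bool} {i : Fin n} (h : φ i = true) :
    lowerCount (Function.update φ i false) = lowerCount φ + 1 := by
  classical
  unfold lowerCount
  have heq : (Finset.univ.filter fun j => Function.update φ i false j = false)
      = insert i (Finset.univ.filter fun j => φ j = false) := by
    ext j
    rcases eq_or_ne j i with rfl | hj
    · simp [h]
    · simp [Function.update_of_ne hj, hj]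
  rw [heq, Finset.card_insert_of_notMem (by simp [h])]

lemma allowedSet_eq_of_no_dim {C : Cuboid n} (h : ∀ i, ¬C.IsDim i) :
    C.allowedSet = {fun _ => true} := by
  ext φ
  rw [mem_allowedSet, Finset.mem_singleton]
  constructor
  · intro hφ; funext i; exact hφ i (h i)
  · rintro rfl i _; rfl

end Cuboid

namespace Cuboid

lemma volExcept_top_decomp {n : ℕ} {G : Type*} [AddCommGroup G] (C : Cuboid n)
    (i : Fin n) (hi : C.IsDim i) (L : (Fin n → ℝ) → G) :
    C.volExcept (fun _ => true) L
      = (C.upperFacet i).volExcept (fun _ => true) L - (C.lowerFacet i).vol L := by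
  classical
  unfold volExcept vol
  have hsplit : C.allowedSet.erase (fun _ => true)
      = ((C.upperFacet i).allowedSet.erase (fun _ => true))
        ∪ (C.allowedSet.filter fun φ => φ i = false) := by
    ext φ
    simp only [Finset.mem_union, Finset.mem_erase, Finset.mem_filter, mem_allowedSet,
      allowed_upperFacet hi]
    constructor
    · rintro ⟨hne, hall⟩
      rcases Bool.eq_false_or_eq_true (φ i) with h | h
      · exact Or.inl ⟨hne, hall, h⟩
      · exact Or.inr ⟨hall, h⟩
    · rintro (⟨hne, hall, _⟩ | ⟨hall, hf⟩)
      · exact ⟨hne, hall⟩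
      · refine ⟨?_, hall⟩
        intro hcon
        have : φ i = true := by rw [hcon]
        simp [hf] at this
  have hdisj : Disjoint ((C.upperFacet i).allowedSet.erase (fun _ => true))
      (C.allowedSet.filter fun φ => φ i = false) := by
    rw [Finset.disjoint_left]
    intro φ h1 h2
    rw [Finset.mem_erase, mem_allowedSet, allowed_upperFacet hi] at h1
    rw [Finset.mem_filter] at h2
    simp [h2.2] at h1
  rw [hsplit, Finset.sum_union hdisj]
  have h1 : ∑ φ ∈ (C.upperFacet i).allowedSet.erase (fun _ => true),
        (-1 : ℤ) ^ lowerCount φ • L (C.vertex φ)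
      = ∑ φ ∈ (C.upperFacet i).allowedSet.erase (fun _ => true),
        (-1 : ℤ) ^ lowerCount φ • L ((C.upperFacet i).vertex φ) := by
    refine Finset.sum_congr rfl fun φ hφ => ?_
    rw [Finset.mem_erase, mem_allowedSet, allowed_upperFacet hi] at hφ
    rw [vertex_upperFacet hφ.2.2]
  have h2 : ∑ φ ∈ (C.allowedSet.filter fun φ => φ i = false),
        (-1 : ℤ) ^ lowerCount φ • L (C.vertex φ)
      = ∑ ψ ∈ (C.lowerFacet i).allowedSet,
        -((-1 : ℤ) ^ lowerCount ψ • L ((C.lowerFacet i).vertex ψ)) := by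
    refine Finset.sum_nbij' (fun φ => Function.update φ i true)
      (fun ψ => Function.update ψ i false) ?_ ?_ ?_ ?_ ?_
    · intro φ hφ
      rw [Finset.mem_filter, mem_allowedSet] at hφ
      rw [mem_allowedSet, allowed_lowerFacet hi]
      refine ⟨fun j hj => ?_, by simp⟩
      show Function.update φ i true j = true
      rcases eq_or_ne j i with rfl | hne
      · simp
      · rw [Function.update_of_ne hne]; exact hφ.1 j hj
    · intro ψ hψ
      rw [mem_allowedSet, allowed_lowerFacet hi] at hψ
      rw [Finset.mem_filter, mem_allowedSet]
      refine ⟨fun j hj => ?_, by simp⟩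
      show Function.update ψ i false j = true
      rcases eq_or_ne j i with rfl | hne
      · exact absurd hi hj
      · rw [Function.update_of_ne hne]; exact hψ.1 j hj
    · intro φ hφ
      rw [Finset.mem_filter] at hφ
      show Function.update (Function.update φ i true) i false = φ
      rw [Function.update_idem, ← hφ.2, Function.update_eq_self]
    · intro ψ hψ
      rw [mem_allowedSet, allowed_lowerFacet hi] at hψ
      show Function.update (Function.update ψ i false) i true = ψ
      rw [Function.update_idem, ← hψ.2, Function.update_eq_self]
    · intro φ hφ
      rw [Finset.mem_filter] at hφ
      have hupd : φ = Function.update (Function.update φ i true) i false := by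
        rw [Function.update_idem, ← hφ.2, Function.update_eq_self]
      have hψi : Function.update φ i true i = true := by simp
      rw [vertex_lowerFacet hψi, ← hupd]
      have hlc : lowerCount φ = lowerCount (Function.update φ i true) + 1 := by
        conv_lhs => rw [hupd]
        rw [lowerCount_update_false hψi]
      rw [hlc, pow_succ]
      simp [neg_smul]
  rw [h1, h2, Finset.sum_neg_distrib, sub_eq_add_neg]

end Cuboid

namespace Cuboid

lemma volExcept_top_eq_zero {n : ℕ} {G : Type*} [AddCommGroup G] {C : Cuboid n}
    (h : ∀ i, ¬C.IsDim i) (L : (Fin n → ℝ) → G) :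
    C.volExcept (fun _ => true) L = 0 := by
  unfold volExcept
  rw [allowedSet_eq_of_no_dim h]
  simp

/-- The dimension set of a cuboid, as a finset. -/
noncomputable def dimSet {n : ℕ} (C : Cuboid n) : Finset (Fin n) :=
  Finset.univ.filter fun i => C.lo i < C.hi i

lemma mem_dimSet {n : ℕ} {C : Cuboid n} {i : Fin n} : i ∈ C.dimSet ↔ C.IsDim i := by
  simp [dimSet, IsDim]

lemma card_dimSet_upperFacet_lt {n : ℕ} (C : Cuboid n) (i : Fin n) (hi : C.IsDim i) :
    (C.upperFacet i).dimSet.card < C.dimSet.card := by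
  have hsub : (C.upperFacet i).dimSet ⊆ C.dimSet.erase i := by
    intro j hj
    rw [mem_dimSet, isDim_upperFacet] at hj
    rw [Finset.mem_erase, mem_dimSet]
    exact ⟨hj.2, hj.1⟩
  calc (C.upperFacet i).dimSet.card ≤ (C.dimSet.erase i).card :=
        Finset.card_le_card hsub
    _ < C.dimSet.card := Finset.card_erase_lt_of_mem (mem_dimSet.mpr hi)

lemma upperFacet_vertexSet_subset {n : ℕ} (C : Cuboid n) (i : Fin n) (hi : C.IsDim i) :
    (C.upperFacet i).vertexSet ⊆ C.vertexSet := by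
  rintro p ⟨φ, hφ, rfl⟩
  rw [allowed_upperFacet hi] at hφ
  exact ⟨φ, hφ.1, vertex_upperFacet hφ.2⟩

lemma upperFacet_top {n : ℕ} (C : Cuboid n) (i : Fin n) :
    (C.upperFacet i).vertex (fun _ => true) = C.vertex (fun _ => true) :=
  vertex_upperFacet rfl

lemma lowerFacet_vertexSet_subset {n : ℕ} (C : Cuboid n) (i : Fin n) (hi : C.IsDim i) :
    (C.lowerFacet i).vertexSet ⊆ C.vertexSet \ {C.vertex fun _ => true} := by
  rintro p ⟨ψ, hψ, rfl⟩
  rw [allowed_lowerFacet hi] at hψ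
  constructor
  · refine ⟨Function.update ψ i false, ?_, vertex_lowerFacet hψ.2⟩
    intro j hj
    rcases eq_or_ne j i with rfl | hne
    · exact absurd hi hj
    · rw [Function.update_of_ne hne]; exact hψ.1 j hj
  · intro hmem
    rw [Set.mem_singleton_iff] at hmem
    have h1 : (C.lowerFacet i).vertex ψ i = C.lo i := by
      rw [vertex_lowerFacet hψ.2]
      simp [vertex]
    have h2 : C.vertex (fun _ => true) i = C.hi i := by simp [vertex]
    rw [hmem, h2] at h1
    exact (ne_of_lt hi) h1.symm

lemma main_aux {n : ℕ} {G : Type*} [AddCommGroup G] [PartialOrder G] [IsOrderedAddMonoid G] (u : G) :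
    ∀ k : ℕ, ∀ C : Cuboid n, C.dimSet.card ≤ k →
      ∀ L : (Fin n → ℝ) → G,
      (∀ D : Cuboid n, D.vertexSet ⊆ C.vertexSet \ {C.vertex fun _ => true} →
          D.vol L ∈ Set.Icc (0 : G) u) →
      0 ≤ -(C.volExcept (fun _ => true) L) := by
  intro k
  induction k with
  | zero =>
    intro C hcard L _
    have hnodim : ∀ i, ¬C.IsDim i := by
      intro i hi
      have : i ∈ C.dimSet := mem_dimSet.mpr hi
      have := Finset.card_pos.mpr ⟨i, this⟩
      omega
    rw [volExcept_top_eq_zero hnodim, neg_zero]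
  | succ k ih =>
    intro C hcard L hlift
    by_cases hd : ∃ i, C.IsDim i
    · obtain ⟨i, hi⟩ := hd
      have hUcard : (C.upperFacet i).dimSet.card ≤ k := by
        have := card_dimSet_upperFacet_lt C i hi
        omega
      have hUsub : (C.upperFacet i).vertexSet \ {(C.upperFacet i).vertex fun _ => true}
          ⊆ C.vertexSet \ {C.vertex fun _ => true} := by
        rw [upperFacet_top]
        exact Set.diff_subset_diff_left (upperFacet_vertexSet_subset C i hi)
      have hU := ih (C.upperFacet i) hUcard L
        (fun D hD => hlift D (hD.trans hUsub))
      have hD0 : 0 ≤ (C.lowerFacet i).vol L :=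
        (hlift (C.lowerFacet i) (lowerFacet_vertexSet_subset C i hi)).1
      rw [volExcept_top_decomp C i hi L, neg_sub, sub_nonneg]
      calc (C.upperFacet i).volExcept (fun _ => true) L ≤ 0 :=
            neg_nonneg.mp hU
        _ ≤ (C.lowerFacet i).vol L := hD0
    · push_neg at hd
      rw [volExcept_top_eq_zero hd, neg_zero]

end Cuboid

open Cuboid in
/-- Let `C` be a cuboid with top vertex `α` (all coordinates at their upper value)
and `L` a partial lift with values in `Γ(G,u) = [0,u]` defined on the vertices of
`C` other than `α` (all volume conditions for cuboids inside this domain hold).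
Then `|α − C|_L ≥ 0`. -/
theorem top_vertex_lower_bound {n : ℕ} {G : Type*} [AddCommGroup G] [PartialOrder G] [IsOrderedAddMonoid G] (u : G)
    (C : Cuboid n) (L : (Fin n → ℝ) → G)
    (hval : ∀ p ∈ C.vertexSet \ {C.vertex fun _ => true}, L p ∈ Set.Icc (0 : G) u)
    (hlift : ∀ D : Cuboid n,
      D.vertexSet ⊆ C.vertexSet \ {C.vertex fun _ => true} →
        D.vol L ∈ Set.Icc (0 : G) u) :
    0 ≤ -(C.volExcept (fun _ => true) L) := by
  exact Cuboid.main_aux u C.dimSet.card C le_rfl L hlift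
end

section
/- Let C be a cuboid and F a collection of its facets such that for each i ∈ Dim(C), at least one of ∂_i(C), ∂'_i(C) does not belong to F. Then every sub-cuboid D of C with D ⊆ ⋃F is contained in some single facet belonging to F. -/
open Cuboid

lemma coord_mem {n : ℕ} (C : Cuboid n) (i : Fin n) {p : Fin n → ℝ}
    (hp : p ∈ C.vertexSet) : p i = C.lo i ∨ p i = C.hi i := by
  obtain ⟨φ, _, rfl⟩ := hp
  by_cases h : φ i <;> simp [Cuboid.vertex, h]

lemma upper_coord {n : ℕ} (C : Cuboid n) (i : Fin n) {p : Fin n → ℝ}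
    (hp : p ∈ (C.upperFacet i).vertexSet) : p i = C.hi i := by
  obtain ⟨φ, _, rfl⟩ := hp
  by_cases h : φ i <;> simp [Cuboid.vertex, Cuboid.upperFacet, h]

lemma lower_coord {n : ℕ} (C : Cuboid n) (i : Fin n) {p : Fin n → ℝ}
    (hp : p ∈ (C.lowerFacet i).vertexSet) : p i = C.lo i := by
  obtain ⟨φ, _, rfl⟩ := hp
  by_cases h : φ i <;> simp [Cuboid.vertex, Cuboid.lowerFacet, h]

lemma mem_upper {n : ℕ} (C : Cuboid n) (i : Fin n) {p : Fin n → ℝ}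
    (hp : p ∈ C.vertexSet) (h : p i = C.hi i) : p ∈ (C.upperFacet i).vertexSet := by
  obtain ⟨φ, hφ, rfl⟩ := hp
  refine ⟨Function.update φ i true, ?_, ?_⟩
  · intro j hj
    rcases eq_or_ne j i with rfl | hne
    · simp
    · rw [Function.update_of_ne hne]
      apply hφ
      simpa [Cuboid.IsDim, Cuboid.upperFacet, Function.update_of_ne hne] using hj
  · funext j
    rcases eq_or_ne j i with rfl | hne
    · simpa [Cuboid.vertex, Cuboid.upperFacet] using h
    · by_cases hj : φ j <;>
        simp [Cuboid.vertex, Cuboid.upperFacet, Function.update_of_ne hne, hj]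

lemma mem_lower {n : ℕ} (C : Cuboid n) (i : Fin n) {p : Fin n → ℝ}
    (hp : p ∈ C.vertexSet) (h : p i = C.lo i) : p ∈ (C.lowerFacet i).vertexSet := by
  obtain ⟨φ, hφ, rfl⟩ := hp
  refine ⟨Function.update φ i true, ?_, ?_⟩
  · intro j hj
    rcases eq_or_ne j i with rfl | hne
    · simp
    · rw [Function.update_of_ne hne]
      apply hφ
      simpa [Cuboid.IsDim, Cuboid.lowerFacet, Function.update_of_ne hne] using hj
  · funext j
    rcases eq_or_ne j i with rfl | hne
    · simpa [Cuboid.vertex, Cuboid.lowerFacet] using h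
    · by_cases hj : φ j <;>
        simp [Cuboid.vertex, Cuboid.lowerFacet, Function.update_of_ne hne, hj]

open Cuboid in
/-- Let `F` be a collection of facets of a cuboid `C` such that for each
`i ∈ Dim(C)` at least one of `∂ᵢ(C)`, `∂'ᵢ(C)` does not belong to `F`. Then every
sub-cuboid `D` of `C` contained in `⋃ F` is contained in a single facet of `F`. -/
theorem subcuboid_in_facet_union_mem_facet {n : ℕ} (C : Cuboid n) (F : Set (Cuboid n))
    (hfacets : ∀ X ∈ F, ∃ i, C.IsDim i ∧ (X = C.upperFacet i ∨ X = C.lowerFacet i))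
    (hnotboth : ∀ i, C.IsDim i → C.upperFacet i ∉ F ∨ C.lowerFacet i ∉ F)
    (D : Cuboid n) (hsub : D.vertexSet ⊆ C.vertexSet)
    (hcov : D.vertexSet ⊆ ⋃ X ∈ F, X.vertexSet) :
    ∃ X ∈ F, D.vertexSet ⊆ X.vertexSet := by
  classical
  -- choose a vertex selector of `D` that dodges facets of `F` whenever `D` varies
  set ψ : Fin n → Bool := fun i => if D.IsDim i ∧ C.upperFacet i ∈ F then false else true
    with hψdef
  have hψallowed : D.Allowed ψ := by
    intro i hi
    simp only [hψdef]
    rw [if_neg (by tauto)]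
  have hpD : D.vertex ψ ∈ D.vertexSet := ⟨ψ, hψallowed, rfl⟩
  set p := D.vertex ψ with hp
  obtain ⟨S, ⟨X, rfl⟩, hS2⟩ := hcov hpD
  simp only [Set.mem_iUnion, exists_prop] at hS2
  obtain ⟨hXF, hpX⟩ := hS2
  obtain ⟨i, hdim, hX | hX⟩ := hfacets X hXF
  · -- X is the upper facet at i
    subst hX
    have hpi : p i = C.hi i := upper_coord C i hpX
    by_cases hDi : D.IsDim i
    · -- D varies at i, but then ψ chose the lower value: contradiction
      exfalso
      have hψi : ψ i = false := by simp [hψdef, hDi, hXF]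
      have hpi' : p i = D.lo i := by simp [hp, Cuboid.vertex, hψi]
      -- the opposite vertex q has q i = D.hi i ≤ C.hi i
      have hqallowed : D.Allowed (Function.update ψ i true) := by
        intro j hj
        rcases eq_or_ne j i with rfl | hne
        · simp
        · rw [Function.update_of_ne hne]; exact hψallowed j hj
      have hqD : D.vertex (Function.update ψ i true) ∈ D.vertexSet :=
        ⟨_, hqallowed, rfl⟩
      have hqi : D.vertex (Function.update ψ i true) i = D.hi i := by
        simp [Cuboid.vertex]
      have hqle : D.vertex (Function.update ψ i true) i ≤ C.hi i := by
        rcases coord_mem C i (hsub hqD) with h | h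
        · rw [h]; exact C.lo_le_hi i
        · rw [h]
      have : D.lo i < D.hi i := hDi
      have : C.hi i < C.hi i := by
        calc C.hi i = p i := hpi.symm
        _ = D.lo i := hpi'
        _ < D.hi i := hDi
        _ ≤ C.hi i := by rw [← hqi]; exact hqle
      exact lt_irrefl _ this
    · -- D is constant at i with value C.hi i: all of D lies in the upper facet
      refine ⟨C.upperFacet i, hXF, ?_⟩
      intro r hr
      obtain ⟨φ, hφ, rfl⟩ := hr
      have hφi : φ i = true := hφ i hDi
      have hψi : ψ i = true := hψallowed i hDi
      have hri : D.vertex φ i = C.hi i := by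
        have : p i = D.hi i := by simp [hp, Cuboid.vertex, hψi]
        simp only [Cuboid.vertex, hφi, if_true]
        rw [← this, hpi]
      exact mem_upper C i (hsub ⟨φ, hφ, rfl⟩) hri
  · -- X is the lower facet at i
    subst hX
    have hpi : p i = C.lo i := lower_coord C i hpX
    by_cases hDi : D.IsDim i
    · -- then the upper facet at i is not in F, so ψ chose the upper value: contradiction
      exfalso
      have hnup : C.upperFacet i ∉ F := by
        rcases hnotboth i hdim with h | h
        · exact h
        · exact absurd hXF h
      have hψi : ψ i = true := by simp [hψdef, hnup]
      have hpi' : p i = D.hi i := by simp [hp, Cuboid.vertex, hψi]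
      have hqallowed : D.Allowed (Function.update ψ i false) := by
        intro j hj
        rcases eq_or_ne j i with rfl | hne
        · exact absurd hDi hj
        · rw [Function.update_of_ne hne]; exact hψallowed j hj
      have hqD : D.vertex (Function.update ψ i false) ∈ D.vertexSet :=
        ⟨_, hqallowed, rfl⟩
      have hqi : D.vertex (Function.update ψ i false) i = D.lo i := by
        simp [Cuboid.vertex]
      have hqge : C.lo i ≤ D.vertex (Function.update ψ i false) i := by
        rcases coord_mem C i (hsub hqD) with h | h
        · rw [h]
        · rw [h]; exact C.lo_le_hi i
      have : C.lo i < C.lo i := by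
        calc C.lo i ≤ D.lo i := by rw [← hqi]; exact hqge
        _ < D.hi i := hDi
        _ = p i := hpi'.symm
        _ = C.lo i := hpi
      exact lt_irrefl _ this
    · refine ⟨C.lowerFacet i, hXF, ?_⟩
      intro r hr
      obtain ⟨φ, hφ, rfl⟩ := hr
      have hφi : φ i = true := hφ i hDi
      have hψi : ψ i = true := hψallowed i hDi
      have hri : D.vertex φ i = C.lo i := by
        have : p i = D.hi i := by simp [hp, Cuboid.vertex, hψi]
        simp only [Cuboid.vertex, hφi, if_true]
        rw [← this, hpi]
      exact mem_lower C i (hsub ⟨φ, hφ, rfl⟩) hri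
end

section
/- Let C₁, C₂ be a splitting of a cuboid C along coordinate i at value c (so C₁ shares all data with C except b^{C₁}_i = c, and C₂ shares all data with C except a^{C₂}_i = c). If a cuboid D satisfies D ⊆ C₁ ∪ C₂ (as vertex sets) and D ⊄ C, then D ⊆ C₁ or D ⊆ C₂. -/
open Cuboid in
/-- Let `C₁, C₂` be a splitting of a cuboid `C` along coordinate `i` at `c`
(`C₁` has `hi i` replaced by `c`, `C₂` has `lo i` replaced by `c`). If a cuboid `D`
satisfies `D ⊆ C₁ ∪ C₂` (as vertex sets) and `D ⊄ C`, then `D ⊆ C₁` or `D ⊆ C₂`. -/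
theorem cuboid_splitting_subset {n : ℕ} (C : Cuboid n) (i : Fin n) (c : ℝ)
    (hc₁ : C.lo i < c) (hc₂ : c < C.hi i)
    (C₁ C₂ : Cuboid n)
    (hC₁lo : C₁.lo = C.lo) (hC₁hi : C₁.hi = Function.update C.hi i c)
    (hC₂lo : C₂.lo = Function.update C.lo i c) (hC₂hi : C₂.hi = C.hi)
    (D : Cuboid n)
    (hcov : D.vertexSet ⊆ C₁.vertexSet ∪ C₂.vertexSet)
    (hnot : ¬D.vertexSet ⊆ C.vertexSet) :
    D.vertexSet ⊆ C₁.vertexSet ∨ D.vertexSet ⊆ C₂.vertexSet := by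
  classical
  have hdim1 : ∀ j, j ≠ i → (C₁.IsDim j ↔ C.IsDim j) := by
    intro j hj
    simp [Cuboid.IsDim, hC₁lo, hC₁hi, Function.update_of_ne hj]
  have hdim2 : ∀ j, j ≠ i → (C₂.IsDim j ↔ C.IsDim j) := by
    intro j hj
    simp [Cuboid.IsDim, hC₂lo, hC₂hi, Function.update_of_ne hj]
  have hdimC : C.IsDim i := hc₁.trans hc₂
  have hdim1i : C₁.IsDim i := by
    simp [Cuboid.IsDim, hC₁lo, hC₁hi, hc₁]
  have hdim2i : C₂.IsDim i := by
    simp [Cuboid.IsDim, hC₂lo, hC₂hi, hc₂]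
  have swap12 : ∀ p ∈ C₁.vertexSet, p i = c → p ∈ C₂.vertexSet := by
    rintro p ⟨φ, hφ, rfl⟩ hpi
    refine ⟨Function.update φ i false, ?_, ?_⟩
    · intro j hj
      rcases eq_or_ne j i with rfl | hne
      · exact absurd hdim2i hj
      · rw [Function.update_of_ne hne]
        exact hφ j (fun h => hj ((hdim2 j hne).mpr ((hdim1 j hne).mp h)))
    · funext j
      rcases eq_or_ne j i with rfl | hne
      · simpa [Cuboid.vertex, hC₂lo] using hpi
      · simp [Cuboid.vertex, Function.update_of_ne hne, hC₁lo, hC₁hi, hC₂lo, hC₂hi]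
  have swap21 : ∀ p ∈ C₂.vertexSet, p i = c → p ∈ C₁.vertexSet := by
    rintro p ⟨φ, hφ, rfl⟩ hpi
    refine ⟨Function.update φ i true, ?_, ?_⟩
    · intro j hj
      rcases eq_or_ne j i with rfl | hne
      · simp
      · rw [Function.update_of_ne hne]
        exact hφ j (fun h => hj ((hdim1 j hne).mpr ((hdim2 j hne).mp h)))
    · funext j
      rcases eq_or_ne j i with rfl | hne
      · simpa [Cuboid.vertex, hC₁hi] using hpi
      · simp [Cuboid.vertex, Function.update_of_ne hne, hC₁lo, hC₁hi, hC₂lo, hC₂hi]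
  have inC1 : ∀ p ∈ C₁.vertexSet, p i ≠ c → p ∈ C.vertexSet := by
    rintro p ⟨φ, hφ, rfl⟩ hpi
    have hφi : φ i = false := by
      cases h : φ i
      · rfl
      · exact absurd (by simp [Cuboid.vertex, h, hC₁hi]) hpi
    refine ⟨φ, ?_, ?_⟩
    · intro j hj
      rcases eq_or_ne j i with rfl | hne
      · exact absurd hdimC hj
      · exact hφ j (fun h => hj ((hdim1 j hne).mp h))
    · funext j
      rcases eq_or_ne j i with rfl | hne
      · simp [Cuboid.vertex, hφi, hC₁lo]
      · simp [Cuboid.vertex, Function.update_of_ne hne, hC₁lo, hC₁hi]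
  have inC2 : ∀ p ∈ C₂.vertexSet, p i ≠ c → p ∈ C.vertexSet := by
    rintro p ⟨φ, hφ, rfl⟩ hpi
    have hφi : φ i = true := by
      cases h : φ i
      · exact absurd (by simp [Cuboid.vertex, h, hC₂lo]) hpi
      · rfl
    refine ⟨φ, ?_, ?_⟩
    · intro j hj
      rcases eq_or_ne j i with rfl | hne
      · exact absurd hdimC hj
      · exact hφ j (fun h => hj ((hdim2 j hne).mp h))
    · funext j
      rcases eq_or_ne j i with rfl | hne
      · simp [Cuboid.vertex, hφi, hC₂hi]
      · simp [Cuboid.vertex, Function.update_of_ne hne, hC₂lo, hC₂hi]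
  obtain ⟨q, hqD, hqC⟩ := Set.not_subset.mp hnot
  have hqc : q i = c := by
    rcases hcov hqD with h | h
    · by_contra hne; exact hqC (inC1 q h hne)
    · by_contra hne; exact hqC (inC2 q h hne)
  obtain ⟨ψ, hψ, rfl⟩ := hqD
  by_cases hhi : D.hi i = c
  · left
    rintro p ⟨φ, hφ, rfl⟩
    have hple : D.vertex φ i ≤ c := by
      rw [← hhi]
      by_cases h : φ i <;> simp [Cuboid.vertex, h, D.lo_le_hi i]
    rcases hcov ⟨φ, hφ, rfl⟩ with h | h
    · exact h
    · obtain ⟨χ, hχ, hp⟩ := h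
      have hpc : D.vertex φ i = c := by
        cases hb : χ i
        · rw [hp]; simp [Cuboid.vertex, hb, hC₂lo]
        · exfalso
          have : D.vertex φ i = C.hi i := by
            rw [hp]; simp [Cuboid.vertex, hb, hC₂hi]
          linarith
      exact swap21 _ ⟨χ, hχ, hp⟩ hpc
  · right
    have hlo : D.lo i = c := by
      cases hb : ψ i
      · simpa [Cuboid.vertex, hb] using hqc
      · exact absurd (by simpa [Cuboid.vertex, hb] using hqc) hhi
    rintro p ⟨φ, hφ, rfl⟩
    have hple : c ≤ D.vertex φ i := by
      rw [← hlo]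
      by_cases h : φ i <;> simp [Cuboid.vertex, h, D.lo_le_hi i]
    rcases hcov ⟨φ, hφ, rfl⟩ with h | h
    · obtain ⟨χ, hχ, hp⟩ := h
      have hpc : D.vertex φ i = c := by
        cases hb : χ i
        · exfalso
          have : D.vertex φ i = C.lo i := by
            rw [hp]; simp [Cuboid.vertex, hb, hC₁lo]
          linarith
        · rw [hp]; simp [Cuboid.vertex, hb, hC₁hi]
      exact swap12 _ ⟨χ, hχ, hp⟩ hpc
    · exact h
end

section
/- Let x and y be n-dimensional observables on a monotone σ-complete effect algebra E such that x((−∞,t₁)×···×(−∞,tₙ)) = y((−∞,t₁)×···×(−∞,tₙ)) for all t₁,...,tₙ ∈ ℝ. Then x = y on all of Borel(ℝⁿ). -/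
/-- An effect algebra `(E; +, 0, 1)`: a partial commutative associative operation
(`Defined a b` means `a + b` is defined) such that every element has a unique
orthosupplement and `a + 1` defined implies `a = 0`. -/
structure EffectAlg (E : Type*) where
  Defined : E → E → Prop
  add : E → E → E
  zero : E
  one : E
  defined_comm : ∀ a b, Defined a b → Defined b a
  add_comm : ∀ a b, Defined a b → add a b = add b a
  defined_assoc_right : ∀ a b c, Defined a b → Defined (add a b) c → Defined b c
  defined_assoc_left : ∀ a b c, Defined a b → Defined (add a b) c → Defined a (add b c)
  add_assoc : ∀ a b c, Defined a b → Defined (add a b) c →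
    add (add a b) c = add a (add b c)
  orthosupplement : ∀ a, ∃! a', Defined a a' ∧ add a a' = one
  add_one : ∀ a, Defined a one → a = zero

namespace EffectAlg

variable {E : Type*} (A : EffectAlg E)

/-- The induced partial order: `a ≤ b` iff `b = a + c` for some `c`. -/
def le (a b : E) : Prop := ∃ c, A.Defined a c ∧ A.add a c = b

/-- `m` is the least upper bound of the set `S` in the induced order. -/
def isLUB (S : Set E) (m : E) : Prop :=
  (∀ x ∈ S, A.le x m) ∧ ∀ b, (∀ x ∈ S, A.le x b) → A.le m b

end EffectAlg

namespace EffectAlgAux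

variable {E : Type*} (A : EffectAlg E)

theorem cancel {a b c : E} (hab : A.Defined a b) (hac : A.Defined a c)
    (h : A.add a b = A.add a c) : b = c := by
  obtain ⟨d, ⟨hd, hd1⟩, _⟩ := A.orthosupplement (A.add a b)
  have hba : A.Defined b a := A.defined_comm _ _ hab
  have hca : A.Defined c a := A.defined_comm _ _ hac
  have hbad : A.Defined (A.add b a) d := by rwa [A.add_comm b a hba]
  have hcad : A.Defined (A.add c a) d := by rwa [A.add_comm c a hca, ← h]
  have h1 : A.add b (A.add a d) = A.one := by
    rw [← A.add_assoc b a d hba hbad, A.add_comm b a hba, hd1]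
  have h2 : A.add c (A.add a d) = A.one := by
    rw [← A.add_assoc c a d hca hcad, A.add_comm c a hca, ← h, hd1]
  have db : A.Defined b (A.add a d) := A.defined_assoc_left b a d hba hbad
  have dc : A.Defined c (A.add a d) := A.defined_assoc_left c a d hca hcad
  obtain ⟨e, _, he⟩ := A.orthosupplement (A.add a d)
  have hb := he b ⟨A.defined_comm _ _ db, by rw [A.add_comm _ b (A.defined_comm _ _ db)]; exact h1⟩
  have hc := he c ⟨A.defined_comm _ _ dc, by rw [A.add_comm _ c (A.defined_comm _ _ dc)]; exact h2⟩
  rw [hb, hc]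

theorem one_zero : A.Defined A.one A.zero ∧ A.add A.one A.zero = A.one := by
  obtain ⟨u, ⟨hu, hu1⟩, _⟩ := A.orthosupplement A.one
  have : u = A.zero := A.add_one u (A.defined_comm _ _ hu)
  rw [← this]; exact ⟨hu, hu1⟩

theorem add_zero (b : E) : A.Defined b A.zero ∧ A.add b A.zero = b := by
  -- first: if a' is a supplement of a then a' + 0 = a'
  have key : ∀ a a' : E, A.Defined a a' → A.add a a' = A.one →
      A.Defined a' A.zero ∧ A.add a' A.zero = a' := by
    intro a a' h h1
    have h10 := one_zero A
    have hD : A.Defined (A.add a a') A.zero := by rw [h1]; exact h10.1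
    have d1 : A.Defined a' A.zero := A.defined_assoc_right a a' A.zero h hD
    have d2 : A.Defined a (A.add a' A.zero) := A.defined_assoc_left a a' A.zero h hD
    have e1 : A.add a (A.add a' A.zero) = A.one := by
      rw [← A.add_assoc a a' A.zero h hD, h1, h10.2]
    obtain ⟨e, _, he⟩ := A.orthosupplement a
    have h2 := he (A.add a' A.zero) ⟨d2, e1⟩
    have h3 := he a' ⟨h, h1⟩
    exact ⟨d1, h2.trans h3.symm⟩
  obtain ⟨b', ⟨hb, hb1⟩, _⟩ := A.orthosupplement b
  exact key b' b (A.defined_comm _ _ hb) (by rw [A.add_comm b' b (A.defined_comm _ _ hb)]; exact hb1)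

theorem le_antisymm {a b : E} (h1 : A.le a b) (h2 : A.le b a) : a = b := by
  obtain ⟨c, hc, hc1⟩ := h1
  obtain ⟨d, hd, hd1⟩ := h2
  have hcd : A.Defined (A.add a c) d := by rwa [hc1]
  have dcd : A.Defined c d := A.defined_assoc_right a c d hc hcd
  have dacd : A.Defined a (A.add c d) := A.defined_assoc_left a c d hc hcd
  have ha : A.add a (A.add c d) = a := by
    rw [← A.add_assoc a c d hc hcd, hc1, hd1]
  have hz := add_zero A a
  have hcd0 : A.add c d = A.zero :=
    cancel A dacd hz.1 (ha.trans hz.2.symm)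
  have h10 := one_zero A
  have hDcd1 : A.Defined (A.add c d) A.one := by
    rw [hcd0]; exact A.defined_comm _ _ h10.1
  have hd0 : d = A.zero := A.add_one d (A.defined_assoc_right c d A.one dcd hDcd1)
  have hc0 : c = A.zero := by
    have := (add_zero A c).2
    rw [← hd0] at this; rw [← this, hcd0]
  rw [← hc1, hc0, (add_zero A a).2]

theorem lub_unique {S : Set E} {m m' : E} (h : A.isLUB S m) (h' : A.isLUB S m') : m = m' :=
  le_antisymm A (h.2 m' h'.1) (h'.2 m h.1)

end EffectAlgAux


/-- An `n`-dimensional observable on an effect algebra: `x(ℝⁿ) = 1`, `x` is additive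
on disjoint Borel sets, and continuous on increasing sequences of Borel sets. -/
def IsObservable {n : ℕ} {E : Type*} (A : EffectAlg E)
    (x : Set (Fin n → ℝ) → E) : Prop :=
  x Set.univ = A.one ∧
  (∀ S T : Set (Fin n → ℝ), MeasurableSet S → MeasurableSet T → Disjoint S T →
    A.Defined (x S) (x T) ∧ x (S ∪ T) = A.add (x S) (x T)) ∧
  (∀ S : ℕ → Set (Fin n → ℝ), (∀ k, MeasurableSet (S k)) → Monotone S →
    A.isLUB (Set.range fun k => x (S k)) (x (⋃ k, S k)))

/-- Two `n`-dimensional observables on a monotone σ-complete effect algebra which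
agree on all products of rays `(−∞,t₁)×⋯×(−∞,tₙ)` agree on every Borel set. -/
theorem observable_unique_of_eq_on_rays {n : ℕ} {E : Type*} (A : EffectAlg E)
    (hσ : ∀ f : ℕ → E, (∀ k, A.le (f k) (f (k + 1))) → ∃ s, A.isLUB (Set.range f) s)
    (x y : Set (Fin n → ℝ) → E)
    (hx : IsObservable A x) (hy : IsObservable A y)
    (hray : ∀ t : Fin n → ℝ, x {p | ∀ i, p i < t i} = y {p | ∀ i, p i < t i}) :
    ∀ S : Set (Fin n → ℝ), MeasurableSet S → x S = y S := by
  classical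
  set s0 : Set (Set (Fin n → ℝ)) := {S | ∃ t : Fin n → ℝ, S = {p | ∀ i, p i < t i}} with hs0
  have hpi : IsPiSystem s0 := by
    rintro _ ⟨t, rfl⟩ _ ⟨t', rfl⟩ -
    refine ⟨fun i => min (t i) (t' i), ?_⟩
    ext p; simp [lt_min_iff, forall_and]
  have hgen : (inferInstance : MeasurableSpace (Fin n → ℝ)) =
      MeasurableSpace.generateFrom s0 := by
    have h1 : s0 = Set.pi Set.univ '' Set.pi Set.univ (fun _ : Fin n => Set.range Set.Iio) := by
      ext S
      constructor
      · rintro ⟨t, rfl⟩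
        exact ⟨fun i => Set.Iio (t i), fun i _ => ⟨t i, rfl⟩, by ext p; simp [Set.mem_pi]⟩
      · rintro ⟨g, hg, rfl⟩
        choose t ht using fun i => hg i (Set.mem_univ i)
        refine ⟨t, ?_⟩
        ext p
        simp only [Set.mem_univ_pi, Set.mem_setOf_eq]
        exact forall_congr' fun i => by rw [← ht i]; rfl
    rw [h1]
    refine (generateFrom_eq_pi (fun _ => ?_) (fun _ => ?_)).symm
    · exact ((borel_eq_generateFrom_Iio (α := ℝ)).symm.trans BorelSpace.measurable_eq.symm)
    · refine ⟨fun k => Set.Iio (k : ℝ), fun k => ⟨k, rfl⟩, ?_⟩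
      ext p
      simpa using (exists_nat_gt p)
  have hempty : ∀ z : Set (Fin n → ℝ) → E, IsObservable A z → z ∅ = A.zero := by
    intro z hz
    have h := (hz.2.1 ∅ Set.univ MeasurableSet.empty MeasurableSet.univ (Set.empty_disjoint _)).1
    rw [hz.1] at h
    exact A.add_one _ h
  have hcompl : ∀ S : Set (Fin n → ℝ), MeasurableSet S → x S = y S → x Sᶜ = y Sᶜ := by
    intro S hS h
    obtain ⟨e, _, he⟩ := A.orthosupplement (x S)
    have hx' := hx.2.1 S Sᶜ hS hS.compl disjoint_compl_right
    have hy' := hy.2.1 S Sᶜ hS hS.compl disjoint_compl_right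
    have h1 : x Sᶜ = e := he _ ⟨hx'.1, by rw [← hx'.2, Set.union_compl_self, hx.1]⟩
    have h2 : y Sᶜ = e := he _ ⟨by rw [h]; exact hy'.1,
      by rw [h, ← hy'.2, Set.union_compl_self, hy.1]⟩
    rw [h1, h2]
  have hunion : ∀ f : ℕ → Set (Fin n → ℝ), Pairwise (Function.onFun Disjoint f) →
      (∀ i, MeasurableSet (f i)) → (∀ i, x (f i) = y (f i)) →
      x (⋃ i, f i) = y (⋃ i, f i) := by
    intro f hdisj hmeas hagree
    set T : ℕ → Set (Fin n → ℝ) := fun k => ⋃ i ∈ Finset.range (k + 1), f i with hT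
    have hTmeas : ∀ k, MeasurableSet (T k) :=
      fun k => MeasurableSet.biUnion (Finset.range (k + 1)).countable_toSet fun i _ => hmeas i
    have hTmono : Monotone T := by
      intro a b hab p hp
      simp only [hT, Set.mem_iUnion, Finset.mem_range] at hp ⊢
      obtain ⟨i, hi, hpi⟩ := hp
      exact ⟨i, by omega, hpi⟩
    have hTU : (⋃ k, T k) = ⋃ i, f i := by
      ext p
      simp only [hT, Set.mem_iUnion, Finset.mem_range]
      constructor
      · rintro ⟨k, i, _, hp⟩; exact ⟨i, hp⟩
      · rintro ⟨i, hp⟩; exact ⟨i, i, by omega, hp⟩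
    have hTagree : ∀ k, x (T k) = y (T k) := by
      intro k
      induction k with
      | zero => simpa [hT] using hagree 0
      | succ k ih =>
        have hTsucc : T (k + 1) = f (k + 1) ∪ T k := by
          simp only [hT, Finset.range_add_one, Finset.set_biUnion_insert]
        have hdisjT : Disjoint (f (k + 1)) (T k) := by
          simp only [hT, Set.disjoint_iUnion_right]
          intro i hi
          exact hdisj (show k + 1 ≠ i by
            have := Finset.mem_range.mp hi; omega)
        have hx' := hx.2.1 (f (k + 1)) (T k) (hmeas _) (hTmeas k) hdisjT
        have hy' := hy.2.1 (f (k + 1)) (T k) (hmeas _) (hTmeas k) hdisjT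
        rw [hTsucc, hx'.2, hy'.2, hagree (k + 1), ih]
    have hxl := hx.2.2 T hTmeas hTmono
    have hyl := hy.2.2 T hTmeas hTmono
    rw [hTU] at hxl hyl
    have hrange : (Set.range fun k => x (T k)) = (Set.range fun k => y (T k)) :=
      congrArg Set.range (funext hTagree)
    exact EffectAlgAux.lub_unique A hxl (hrange ▸ hyl)
  intro S hS
  refine MeasurableSpace.induction_on_inter hgen hpi ?_ ?_ hcompl hunion _ hS
  · rw [hempty x hx, hempty y hy]
  · rintro _ ⟨t, rfl⟩; exact hray t
end

section
/- Let T be an effect-tribe of fuzzy sets on a nonempty set Ω, and let F : ℝⁿ → T be an n-dimensional spectral resolution (monotone, pointwise suprema/infima limits as in the definition, with the volume condition). Then there exists a unique n-dimensional observable x : Borel(ℝⁿ) → T with x((−∞,s₁)×···×(−∞,sₙ)) = F(s₁,...,sₙ) for all s₁,...,sₙ ∈ ℝ. -/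
/-- An effect-tribe on `Ω`: a family of fuzzy sets containing `1`, closed under
`f ↦ 1 − f`, closed under sums `f + g` when `f ≤ 1 − g`, and closed under pointwise
suprema of increasing sequences. -/
def IsEffectTribe {Ω : Type*} (T : Set (Ω → ℝ)) : Prop :=
  (∀ f ∈ T, ∀ ω, f ω ∈ Set.Icc (0 : ℝ) 1) ∧
  ((fun _ => (1 : ℝ)) ∈ T) ∧
  (∀ f ∈ T, (fun ω => 1 - f ω) ∈ T) ∧
  (∀ f ∈ T, ∀ g ∈ T, (∀ ω, f ω ≤ 1 - g ω) → (fun ω => f ω + g ω) ∈ T) ∧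
  (∀ f : ℕ → Ω → ℝ, (∀ k, f k ∈ T) → (∀ k ω, f k ω ≤ f (k + 1) ω) →
    (fun ω => ⨆ k, f k ω) ∈ T)

/-- An `n`-dimensional spectral resolution with values in an effect-tribe `T`:
monotone, with pointwise supremum `1`, left-continuous, pointwise infimum `0` in
each coordinate, and satisfying the (pointwise) volume condition. -/
def IsTribeSpectralResolution {n : ℕ} {Ω : Type*} (T : Set (Ω → ℝ))
    (F : (Fin n → ℝ) → Ω → ℝ) : Prop :=
  (∀ s, F s ∈ T) ∧
  (∀ s t : Fin n → ℝ, (∀ i, s i ≤ t i) → ∀ ω, F s ω ≤ F t ω) ∧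
  (∀ ω, (⨆ s : Fin n → ℝ, F s ω) = 1) ∧
  (∀ (t : Fin n → ℝ) (ω : Ω),
    (⨆ s : {s : Fin n → ℝ // ∀ i, s i < t i}, F s.1 ω) = F t ω) ∧
  (∀ (i : Fin n) (t : Fin n → ℝ) (ω : Ω),
    (⨅ r : ℝ, F (Function.update t i r) ω) = 0) ∧
  (∀ a b : Fin n → ℝ, (∀ i, a i ≤ b i) → ∀ ω,
    0 ≤ ∑ φ : Fin n → Bool,
      (-1 : ℝ) ^ (Finset.univ.filter fun i => φ i = false).card *
        F (fun i => if φ i then b i else a i) ω)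

/-- An `n`-dimensional observable with values in an effect-tribe `T`, defined on the
Borel σ-algebra of `ℝⁿ`. -/
def IsTribeObservable {n : ℕ} {Ω : Type*} (T : Set (Ω → ℝ))
    (x : {S : Set (Fin n → ℝ) // MeasurableSet S} → Ω → ℝ) : Prop :=
  (∀ S, x S ∈ T) ∧
  (x ⟨Set.univ, MeasurableSet.univ⟩ = fun _ => (1 : ℝ)) ∧
  (∀ S₁ S₂ : {S : Set (Fin n → ℝ) // MeasurableSet S}, Disjoint S₁.1 S₂.1 →
    ∀ ω, x ⟨S₁.1 ∪ S₂.1, S₁.2.union S₂.2⟩ ω = x S₁ ω + x S₂ ω) ∧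
  (∀ S : ℕ → {S : Set (Fin n → ℝ) // MeasurableSet S},
    Monotone (fun k => (S k).1) →
    ∀ ω, (⨆ k, x (S k) ω) =
      x ⟨⋃ k, (S k).1, MeasurableSet.iUnion fun k => (S k).2⟩ ω)

theorem ray_measurableSet {n : ℕ} (s : Fin n → ℝ) :
    MeasurableSet {p : Fin n → ℝ | ∀ i, p i < s i} := by
  have h : {p : Fin n → ℝ | ∀ i, p i < s i} = ⋂ i, {p : Fin n → ℝ | p i < s i} := by
    ext p; simp
  rw [h]
  exact MeasurableSet.iInter fun i =>
    measurableSet_lt (measurable_pi_apply i) measurable_const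

namespace TribeSpectral

open Set Filter Function MeasureTheory Topology BoxIntegral
open ENNReal (ofReal)
open scoped ENNReal NNReal

variable {n : ℕ}

/-- Corner of the box `[a, b)` selected by `φ`. -/
def corner (a b : Fin n → ℝ) (φ : Fin n → Bool) : Fin n → ℝ := fun i => if φ i then b i else a i

/-- Sign attached to a corner. -/
def sgn (φ : Fin n → Bool) : ℝ :=
  (-1 : ℝ) ^ (Finset.univ.filter fun i => φ i = false).card

/-- The `f`-volume of the box `[a, b)`. -/
def vol (f : (Fin n → ℝ) → ℝ) (a b : Fin n → ℝ) : ℝ :=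
  ∑ φ : Fin n → Bool, sgn φ * f (corner a b φ)

lemma sgn_update_not (φ : Fin n → Bool) (i : Fin n) :
    sgn (Function.update φ i (!φ i)) = -sgn φ := by
  classical
  by_cases h : φ i = true
  · -- φ i = true ; update to false : filter gains i
    have hfil : (Finset.univ.filter fun j => Function.update φ i (!φ i) j = false)
        = insert i (Finset.univ.filter fun j => φ j = false) := by
      ext j
      by_cases hj : j = i
      · subst hj; simp [h]
      · simp [Function.update_of_ne hj, hj]
    have hi : i ∉ (Finset.univ.filter fun j => φ j = false) := by
      simp [h]
    rw [sgn, sgn, hfil, Finset.card_insert_of_notMem hi, pow_succ]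
    ring
  · -- φ i = false ; update to true : filter loses i
    have h' : φ i = false := by simpa using h
    have hfil : (Finset.univ.filter fun j => φ j = false)
        = insert i (Finset.univ.filter fun j => Function.update φ i (!φ i) j = false) := by
      ext j
      by_cases hj : j = i
      · subst hj; simp [h']
      · simp [Function.update_of_ne hj, hj]
    have hi : i ∉ (Finset.univ.filter fun j => Function.update φ i (!φ i) j = false) := by
      simp [h']
    rw [sgn, sgn, hfil, Finset.card_insert_of_notMem hi, pow_succ]
    ring

/-- The fundamental splitting identity for `vol`, valid for arbitrary `a b t`. -/
lemma vol_split (f : (Fin n → ℝ) → ℝ) (a b : Fin n → ℝ) (i : Fin n) (t : ℝ) :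
    vol f a b = vol f a (Function.update b i t) + vol f (Function.update a i t) b := by
  classical
  have hc1 : ∀ φ : Fin n → Bool, corner a (Function.update b i t) φ
      = if φ i then Function.update (corner a b φ) i t else corner a b φ := by
    intro φ
    by_cases h : φ i = true <;>
      · funext j
        by_cases hj : j = i
        · subst hj; simp [corner, h]
        · simp [corner, Function.update_of_ne hj, hj, h]
  have hc2 : ∀ φ : Fin n → Bool, corner (Function.update a i t) b φ
      = if φ i then corner a b φ else Function.update (corner a b φ) i t := by
    intro φ
    by_cases h : φ i = true <;>
      · funext j
        by_cases hj : j = i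
        · subst hj; simp [corner, h]
        · simp [corner, Function.update_of_ne hj, hj, h]
  have hD : ∀ φ : Fin n → Bool,
      Function.update (corner a b φ) i t
        = Function.update (corner a b (Function.update φ i (!φ i))) i t := by
    intro φ
    funext j
    by_cases hj : j = i
    · subst hj; simp
    · simp [corner, Function.update_of_ne hj, hj]
  have key : (∑ φ : Fin n → Bool, sgn φ * f (Function.update (corner a b φ) i t)) = 0 := by
    refine Finset.sum_involution (fun φ _ => Function.update φ i (!φ i)) ?_ ?_ ?_ ?_
    · intro φ _
      rw [sgn_update_not, ← hD]
      ring
    · intro φ _ _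
      intro hEq
      have : φ i = !φ i := by
        conv_lhs => rw [← hEq]
        simp
      simp at this
    · intro φ _; exact Finset.mem_univ _
    · intro φ _
      funext j
      by_cases hj : j = i
      · subst hj; simp
      · simp [Function.update_of_ne hj]
  have expand : vol f a (Function.update b i t) + vol f (Function.update a i t) b
      = vol f a b + ∑ φ : Fin n → Bool, sgn φ * f (Function.update (corner a b φ) i t) := by
    rw [vol, vol, vol, ← Finset.sum_add_distrib, ← Finset.sum_add_distrib]
    refine Finset.sum_congr rfl fun φ _ => ?_
    rw [hc1, hc2]
    by_cases h : φ i = true <;> simp [h] <;> ring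
  rw [expand, key, add_zero]

lemma vol_degenerate (f : (Fin n → ℝ) → ℝ) {a b : Fin n → ℝ} {i : Fin n} (h : a i = b i) :
    vol f a b = 0 := by
  have h1 := vol_split f a b i (b i)
  have e1 : Function.update b i (b i) = b := Function.update_eq_self i b
  have e2 : Function.update a i (b i) = a := by rw [← h]; exact Function.update_eq_self i a
  rw [e1, e2] at h1
  linarith


/-- An abstract `n`-dimensional (left-continuous) distribution function. -/
structure IsCDF (f : (Fin n → ℝ) → ℝ) : Prop where
  nonneg : ∀ s, 0 ≤ f s
  le_one : ∀ s, f s ≤ 1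
  mono : ∀ {s t : Fin n → ℝ}, (∀ i, s i ≤ t i) → f s ≤ f t
  sup_one : (⨆ s : Fin n → ℝ, f s) = 1
  left_cont : ∀ t : Fin n → ℝ, (⨆ s : {s : Fin n → ℝ // ∀ i, s i < t i}, f s.1) = f t
  inf_zero : ∀ (i : Fin n) (t : Fin n → ℝ), (⨅ r : ℝ, f (Function.update t i r)) = 0
  vol_nonneg : ∀ a b : Fin n → ℝ, (∀ i, a i ≤ b i) → 0 ≤ vol f a b

namespace IsCDF

variable {f : (Fin n → ℝ) → ℝ} (hf : IsCDF f)

include hf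

lemma vol_le_update_upper {a b : Fin n → ℝ} (hab : ∀ i, a i ≤ b i) {i : Fin n} {c : ℝ}
    (h : b i ≤ c) : vol f a b ≤ vol f a (Function.update b i c) := by
  have hs := vol_split f a (Function.update b i c) i (b i)
  have e1 : Function.update (Function.update b i c) i (b i) = b := by
    rw [Function.update_idem]; exact Function.update_eq_self i b
  rw [e1] at hs
  have h2 : 0 ≤ vol f (Function.update a i (b i)) (Function.update b i c) := by
    refine hf.vol_nonneg _ _ fun j => ?_
    by_cases hj : j = i
    · subst hj; simpa using h
    · simpa [Function.update_of_ne hj] using hab j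
  linarith

lemma vol_le_update_lower {a b : Fin n → ℝ} (hab : ∀ i, a i ≤ b i) {i : Fin n} {c : ℝ}
    (h : c ≤ a i) : vol f a b ≤ vol f (Function.update a i c) b := by
  have hs := vol_split f (Function.update a i c) b i (a i)
  have e1 : Function.update (Function.update a i c) i (a i) = a := by
    rw [Function.update_idem]; exact Function.update_eq_self i a
  rw [e1] at hs
  have h2 : 0 ≤ vol f (Function.update a i c) (Function.update b i (a i)) := by
    refine hf.vol_nonneg _ _ fun j => ?_
    by_cases hj : j = i
    · subst hj; simpa using h
    · simpa [Function.update_of_ne hj] using hab j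
  linarith

lemma vol_mono {a' a b b' : Fin n → ℝ} (ha' : ∀ i, a' i ≤ a i) (hab : ∀ i, a i ≤ b i)
    (hb' : ∀ i, b i ≤ b' i) : vol f a b ≤ vol f a' b' := by
  classical
  -- first enlarge the upper corner
  have step1 : ∀ s : Finset (Fin n), vol f a b ≤ vol f a (s.piecewise b' b) := by
    intro s
    induction s using Finset.induction_on with
    | empty => simp
    | insert i s hi ih =>
        rw [Finset.piecewise_insert]
        refine ih.trans ?_
        refine hf.vol_le_update_upper (fun j => ?_) ?_
        · by_cases hj : j ∈ s <;> simp [Finset.piecewise, hj, (hab j).trans (hb' j), hab j]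
        · by_cases hij : i ∈ s <;> simp [Finset.piecewise, hij, hb' i]
  have h1 : vol f a b ≤ vol f a b' := by
    simpa [Finset.piecewise_univ] using step1 Finset.univ
  -- then lower the lower corner
  have hab' : ∀ i, a i ≤ b' i := fun i => (hab i).trans (hb' i)
  have step2 : ∀ s : Finset (Fin n), vol f a b' ≤ vol f (s.piecewise a' a) b' := by
    intro s
    induction s using Finset.induction_on with
    | empty => simp
    | insert i s hi ih =>
        rw [Finset.piecewise_insert]
        refine ih.trans ?_
        refine hf.vol_le_update_lower (fun j => ?_) ?_
        · by_cases hj : j ∈ s <;> simp [Finset.piecewise, hj, (ha' j).trans (hab' j), hab' j]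
        · by_cases hij : i ∈ s <;> simp [Finset.piecewise, hij, ha' i]
  have h2 : vol f a b' ≤ vol f a' b' := by
    simpa [Finset.piecewise_univ] using step2 Finset.univ
  linarith



include hf

/-- Continuity from below along monotone coordinatewise-convergent sequences. -/
lemma tendsto_f_from_below (b : Fin n → ℝ) (c : ℕ → Fin n → ℝ)
    (hmono : ∀ i, Monotone fun k => c k i) (hle : ∀ k i, c k i ≤ b i)
    (hlim : ∀ i, Tendsto (fun k => c k i) atTop (𝓝 (b i))) :
    Tendsto (fun k => f (c k)) atTop (𝓝 (f b)) := by
  have hm : Monotone fun k => f (c k) := fun k l hkl => hf.mono fun i => hmono i hkl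
  have hbdd : BddAbove (Set.range fun k => f (c k)) := ⟨1, by rintro x ⟨k, rfl⟩; exact hf.le_one _⟩
  have h1 : Tendsto (fun k => f (c k)) atTop (𝓝 (⨆ k, f (c k))) := tendsto_atTop_ciSup hm hbdd
  have h2 : (⨆ k, f (c k)) = f b := by
    refine le_antisymm (ciSup_le fun k => hf.mono (hle k)) ?_
    rw [← hf.left_cont b]
    have hne : Nonempty {s : Fin n → ℝ // ∀ i, s i < b i} :=
      ⟨⟨fun i => b i - 1, fun i => by simpa using sub_lt_self (b i) one_pos⟩⟩
    refine ciSup_le fun s => ?_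
    have : ∀ᶠ k in atTop, ∀ i, s.1 i ≤ c k i := by
      rw [eventually_all]
      intro i
      exact ((hlim i).eventually (eventually_gt_nhds (s.2 i))).mono fun k hk => hk.le
    obtain ⟨k, hk⟩ := this.exists
    exact (hf.mono hk).trans (le_ciSup hbdd k)
  rwa [h2] at h1

lemma tendsto_update_atBot (i : Fin n) (t : Fin n → ℝ) :
    Tendsto (fun r : ℝ => f (Function.update t i r)) atBot (𝓝 0) := by
  have hm : Monotone fun r : ℝ => f (Function.update t i r) := by
    intro r r' hrr'
    refine hf.mono fun j => ?_
    by_cases hj : j = i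
    · subst hj; simpa using hrr'
    · simp [Function.update_of_ne hj]
  have hbdd : BddBelow (Set.range fun r : ℝ => f (Function.update t i r)) :=
    ⟨0, by rintro x ⟨r, rfl⟩; exact hf.nonneg _⟩
  have := tendsto_atBot_ciInf hm hbdd
  rwa [hf.inf_zero i t] at this

/-- The volume of `[L k, b)` tends to `f b` as the lower corner goes to `-∞`. -/
lemma tendsto_vol_lower_atBot (b : Fin n → ℝ) (L : ℕ → Fin n → ℝ)
    (hL : ∀ i, Tendsto (fun k => L k i) atTop atBot) :
    Tendsto (fun k => vol f (L k) b) atTop (𝓝 (f b)) := by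
  classical
  have htop : ∀ k, vol f (L k) b
      = sgn (fun _ : Fin n => true) * f (corner (L k) b fun _ => true)
        + ∑ φ ∈ Finset.univ.erase (fun _ : Fin n => true), sgn φ * f (corner (L k) b φ) := by
    intro k
    rw [vol, ← Finset.add_sum_erase _ _ (Finset.mem_univ _)]
  have hsgn : sgn (fun _ : Fin n => true) = 1 := by simp [sgn]
  have hcorner : ∀ k, corner (L k) b (fun _ => true) = b := by intro k; funext j; simp [corner]
  have hrest : Tendsto (fun k => ∑ φ ∈ Finset.univ.erase (fun _ : Fin n => true),
      sgn φ * f (corner (L k) b φ)) atTop (𝓝 0) := by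
    have : Tendsto (fun k => ∑ φ ∈ Finset.univ.erase (fun _ : Fin n => true),
        sgn φ * f (corner (L k) b φ)) atTop
        (𝓝 (∑ φ ∈ Finset.univ.erase (fun _ : Fin n => true), 0)) := by
      refine tendsto_finset_sum _ fun φ hφ => ?_
      have hφ' : ∃ i₀, φ i₀ = false := by
        by_contra hno
        push_neg at hno
        exact (Finset.mem_erase.1 hφ).1 (funext fun i => by
          have := hno i; revert this; cases φ i <;> simp)
      obtain ⟨i₀, hi₀⟩ := hφ'
      have hzero : Tendsto (fun k => f (corner (L k) b φ)) atTop (𝓝 0) := by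
        have hub : Tendsto (fun k => f (Function.update b i₀ (L k i₀))) atTop (𝓝 0) :=
          (hf.tendsto_update_atBot i₀ b).comp (hL i₀)
        refine squeeze_zero' (Eventually.of_forall fun k => hf.nonneg _) ?_ hub
        have hev : ∀ᶠ k in atTop, ∀ j, L k j ≤ b j := by
          rw [eventually_all]; intro j; exact (hL j).eventually_le_atBot (b j)
        refine hev.mono fun k hk => hf.mono fun j => ?_
        by_cases hj : j = i₀
        · subst hj; simp [corner, hi₀]
        · rcases Bool.eq_false_or_eq_true (φ j) with h | h <;>
            simp [corner, h, Function.update_of_ne hj, hk j]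
      simpa using hzero.const_mul (sgn φ)
    simpa using this
  have := hrest.const_add (f b)
  simp only [add_zero] at this
  refine Tendsto.congr (fun k => ?_) this
  rw [htop k, hsgn, hcorner k, one_mul]

/-- Approximating the upper corner strictly from below. -/
lemma exists_upper_approx {a b : Fin n → ℝ} (hab : ∀ i, a i < b i) {ε : ℝ} (hε : 0 < ε) :
    ∃ b' : Fin n → ℝ, (∀ i, a i < b' i ∧ b' i < b i) ∧ vol f a b - ε ≤ vol f a b' := by
  set c : ℕ → Fin n → ℝ := fun m i => max (b i - 1 / (m + 1)) ((a i + b i) / 2) with hc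
  have hmono : ∀ i, Monotone fun m => c m i := by
    intro i m l hml
    refine max_le_max ?_ le_rfl
    have : (1:ℝ) / (l + 1) ≤ 1 / (m + 1) := by
      apply one_div_le_one_div_of_le <;> [positivity; exact_mod_cast by omega]
    linarith
  have hlt : ∀ m i, c m i < b i := by
    intro m i
    have h1 : (0:ℝ) < 1 / (m+1) := by positivity
    exact max_lt (by linarith) (by linarith [hab i])
  have hgt : ∀ m i, a i < c m i := fun m i => lt_max_of_lt_right (by linarith [hab i])
  have hlim : ∀ i, Tendsto (fun m => c m i) atTop (𝓝 (b i)) := by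
    intro i
    have h1 : Tendsto (fun m : ℕ => b i - 1 / (m + 1)) atTop (𝓝 (b i)) := by
      have := tendsto_one_div_add_atTop_nhds_zero_nat (𝕜 := ℝ)
      have h2 := (tendsto_const_nhds : Tendsto (fun _ : ℕ => b i) atTop (𝓝 (b i)))
      simpa using h2.sub this
    have h3 := h1.max (tendsto_const_nhds (x := (a i + b i) / 2))
    have : max (b i) ((a i + b i)/2) = b i := max_eq_left (by linarith [hab i])
    rwa [this] at h3
  have hvol : Tendsto (fun m => vol f a (c m)) atTop (𝓝 (vol f a b)) := by
    rw [vol]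
    have : ∀ φ : Fin n → Bool, Tendsto (fun m => f (corner a (c m) φ)) atTop
        (𝓝 (f (corner a b φ))) := by
      intro φ
      refine hf.tendsto_f_from_below (corner a b φ) (fun m => corner a (c m) φ) ?_ ?_ ?_
      · intro i m l hml
        rcases Bool.eq_false_or_eq_true (φ i) with h | h <;> simp [corner, h, hmono i hml]
      · intro m i
        rcases Bool.eq_false_or_eq_true (φ i) with h | h <;> simp [corner, h, (hlt m i).le]
      · intro i
        by_cases h : φ i = true
        · simpa [corner, h] using hlim i
        · simpa [corner, h] using
            (tendsto_const_nhds : Tendsto (fun _ : ℕ => a i) atTop (𝓝 (a i)))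
    exact tendsto_finset_sum _ fun φ _ => ((this φ).const_mul (sgn φ))
  have hev : ∀ᶠ m in atTop, vol f a b - ε ≤ vol f a (c m) :=
    (hvol.eventually (eventually_ge_nhds (by linarith : vol f a b - ε < vol f a b)))
  obtain ⟨m, hm⟩ := hev.exists
  exact ⟨c m, fun i => ⟨hgt m i, hlt m i⟩, hm⟩

/-- Approximating the lower corner strictly from below. -/
lemma exists_lower_approx (a b : Fin n → ℝ) {ε : ℝ} (hε : 0 < ε) :
    ∃ a' : Fin n → ℝ, (∀ i, a' i < a i) ∧ vol f a' b ≤ vol f a b + ε := by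
  set c : ℕ → Fin n → ℝ := fun m i => a i - 1 / (m + 1) with hc
  have hmono : ∀ i, Monotone fun m => c m i := by
    intro i m l hml
    have : (1:ℝ) / (l + 1) ≤ 1 / (m + 1) := by
      apply one_div_le_one_div_of_le <;> [positivity; exact_mod_cast by omega]
    simp only [hc]
    linarith
  have hlt : ∀ m i, c m i < a i := fun m i => by
    have : (0:ℝ) < 1 / (m+1) := by positivity
    simp only [hc]; linarith
  have hlim : ∀ i, Tendsto (fun m => c m i) atTop (𝓝 (a i)) := by
    intro i
    have := tendsto_one_div_add_atTop_nhds_zero_nat (𝕜 := ℝ)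
    have h2 := (tendsto_const_nhds : Tendsto (fun _ : ℕ => a i) atTop (𝓝 (a i)))
    simpa [hc] using h2.sub this
  have hvol : Tendsto (fun m => vol f (c m) b) atTop (𝓝 (vol f a b)) := by
    rw [vol]
    have : ∀ φ : Fin n → Bool, Tendsto (fun m => f (corner (c m) b φ)) atTop
        (𝓝 (f (corner a b φ))) := by
      intro φ
      refine hf.tendsto_f_from_below (corner a b φ) (fun m => corner (c m) b φ) ?_ ?_ ?_
      · intro i m l hml
        rcases Bool.eq_false_or_eq_true (φ i) with h | h <;> simp [corner, h, (hmono i hml)]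
      · intro m i
        rcases Bool.eq_false_or_eq_true (φ i) with h | h <;> simp [corner, h, (hlt m i).le]
      · intro i
        by_cases h : φ i = true
        · simpa [corner, h] using
            (tendsto_const_nhds : Tendsto (fun _ : ℕ => b i) atTop (𝓝 (b i)))
        · simpa [corner, h] using hlim i
    exact tendsto_finset_sum _ fun φ _ => ((this φ).const_mul (sgn φ))
  have hev : ∀ᶠ m in atTop, vol f (c m) b ≤ vol f a b + ε :=
    (hvol.eventually (eventually_le_nhds (by linarith : vol f a b < vol f a b + ε)))
  obtain ⟨m, hm⟩ := hev.exists
  exact ⟨c m, hlt m, hm⟩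

lemma sup_f_nat : (⨆ k : ℕ, f fun _ => (k : ℝ)) = 1 := by
  have hbdd : BddAbove (Set.range fun k : ℕ => f fun _ => (k:ℝ)) :=
    ⟨1, by rintro x ⟨k, rfl⟩; exact hf.le_one _⟩
  refine le_antisymm (ciSup_le fun k => hf.le_one _) ?_
  rw [← hf.sup_one]
  refine ciSup_le fun s => ?_
  obtain ⟨M, hM⟩ := Finset.exists_le (Finset.univ.image s)
  obtain ⟨k, hk⟩ := exists_nat_ge M
  refine le_trans (hf.mono fun i => ?_) (le_ciSup hbdd k)
  exact le_trans (hM _ (Finset.mem_image_of_mem s (Finset.mem_univ i))) hk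



end IsCDF

/-- `f`-volume of a `BoxIntegral` box, via reflection (`Ioc` boxes become `Ico` boxes). -/
def boxVol (f : (Fin n → ℝ) → ℝ) (I : Box (Fin n)) : ℝ :=
  vol f (fun i => -I.upper i) (fun i => -I.lower i)

lemma neg_update (u : Fin n → ℝ) (i : Fin n) (x : ℝ) :
    (fun j => -(Function.update u i x j)) = Function.update (fun j => -u j) i (-x) := by
  funext j
  by_cases hj : j = i
  · subst hj; simp
  · simp [Function.update_of_ne hj]

namespace IsCDF
variable {f : (Fin n → ℝ) → ℝ}

lemma boxVol_nonneg (hf : IsCDF f) (I : Box (Fin n)) : 0 ≤ boxVol f I :=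
  hf.vol_nonneg _ _ fun i => neg_le_neg (I.lower_le_upper i)

variable (hf : IsCDF f)

/-- `boxVol` as a box-additive map. -/
noncomputable def boxAdd (hf : IsCDF f) : BoxAdditiveMap (Fin n) ℝ ⊤ :=
  BoxAdditiveMap.ofMapSplitAdd (boxVol f) ⊤ (by
    intro I _ i x hx
    rw [Box.splitLower_def hx, Box.splitUpper_def hx]
    show boxVol f ⟨I.lower, Function.update I.upper i x, _⟩
        + boxVol f ⟨Function.update I.lower i x, I.upper, _⟩ = boxVol f I
    unfold boxVol
    simp only [neg_update]
    rw [add_comm, vol_split f (fun i => -I.upper i) (fun i => -I.lower i) i (-x)])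

@[simp] lemma boxAdd_apply (I : Box (Fin n)) : hf.boxAdd I = boxVol f I := rfl

include hf

lemma sum_boxVol_le (J : Box (Fin n)) (π : Prepartition J) :
    ∑ J' ∈ π.boxes, boxVol f J' ≤ boxVol f J := by
  classical
  have hpart := Prepartition.isPartitionDisjUnionOfEqDiff (π.iUnion_compl)
  have htot := hf.boxAdd.sum_partition_boxes le_top hpart
  have hsub : π.boxes ⊆ (π.disjUnion π.compl
      ((π.iUnion_compl).symm ▸ disjoint_sdiff_self_right)).boxes := by
    intro J' hJ'
    simp only [Prepartition.disjUnion, Finset.mem_union]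
    exact Or.inl hJ'
  calc ∑ J' ∈ π.boxes, boxVol f J'
      ≤ ∑ J' ∈ (π.disjUnion π.compl _).boxes, boxVol f J' :=
        Finset.sum_le_sum_of_subset_of_nonneg hsub fun J' _ _ => hf.boxVol_nonneg J'
    _ = boxVol f J := htot

lemma boxVol_le_sum {I : Box (Fin n)} {J : ℕ → Box (Fin n)} {t : Finset ℕ}
    (h : (I : Set (Fin n → ℝ)) ⊆ ⋃ k ∈ t, ↑(J k)) :
    boxVol f I ≤ ∑ k ∈ t, boxVol f (J k) := by
  classical
  obtain ⟨s, hs⟩ := (Prepartition.eventually_not_disjoint_imp_le_of_mem_splitMany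
    (t.image J)).exists
  set π := Prepartition.splitMany I s with hπ
  have hpart : π.IsPartition := Prepartition.isPartition_splitMany I s
  have hIvol : boxVol f I = ∑ J' ∈ π.boxes, boxVol f J' :=
    (hf.boxAdd.sum_partition_boxes le_top hpart).symm
  -- assign each subbox to a covering box
  have hassign : ∀ J' ∈ π.boxes, ∃ k, k ∈ t ∧ J' ≤ J k := by
    intro J' hJ'
    have hsubI : (J' : Set (Fin n → ℝ)) ⊆ I := π.le_of_mem hJ'
    have hx : J'.upper ∈ (I : Set (Fin n → ℝ)) := hsubI J'.upper_mem
    obtain ⟨k, hk, hxk⟩ := Set.mem_iUnion₂.1 (h hx)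
    refine ⟨k, hk, hs I (J k) (Finset.mem_image_of_mem J hk) J' hJ' ?_⟩
    exact Box.not_disjoint_coe_iff_nonempty_inter.2 ⟨J'.upper, hxk, J'.upper_mem⟩
  have hgdef : ∀ J' : Box (Fin n), J' ∈ π.boxes →
      (if hh : ∃ k, k ∈ t ∧ J' ≤ J k then hh.choose else 0) ∈ t := by
    intro J' hJ'
    rw [dif_pos (hassign J' hJ')]
    exact (hassign J' hJ').choose_spec.1
  set g : Box (Fin n) → ℕ := fun J' => if hh : ∃ k, k ∈ t ∧ J' ≤ J k then hh.choose else 0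
    with hg
  have hfiber := Finset.sum_fiberwise_of_maps_to (g := g) (fun J' hJ' => hgdef J' hJ')
    (boxVol f)
  rw [hIvol, ← hfiber]
  refine Finset.sum_le_sum fun k hk => ?_
  -- the fiber over k forms a prepartition of `J k`
  have hle : ∀ J' ∈ π.boxes.filter (fun J' => g J' = k), J' ≤ J k := by
    intro J' hJ'
    rw [Finset.mem_filter] at hJ'
    obtain ⟨hJ'1, hJ'2⟩ := hJ'
    have hex := hassign J' hJ'1
    have : g J' = hex.choose := dif_pos hex
    rw [this] at hJ'2
    exact hJ'2 ▸ hex.choose_spec.2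
  exact hf.sum_boxVol_le (J k)
    { boxes := π.boxes.filter (fun J' => g J' = k)
      le_of_mem' := hle
      pairwiseDisjoint := fun J₁ h₁ J₂ h₂ hne =>
        π.pairwiseDisjoint (Finset.mem_coe.2 (Finset.mem_filter.1 (Finset.mem_coe.1 h₁)).1)
          (Finset.mem_coe.2 (Finset.mem_filter.1 (Finset.mem_coe.1 h₂)).1) hne }



end IsCDF

/-- The half-open box `[a, b)` in `ℝⁿ`. -/
def boxSet (a b : Fin n → ℝ) : Set (Fin n → ℝ) := Set.univ.pi fun i => Ico (a i) (b i)

lemma mem_boxSet {a b p : Fin n → ℝ} : p ∈ boxSet a b ↔ ∀ i, a i ≤ p i ∧ p i < b i := by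
  simp [boxSet]

/-- The `BoxIntegral` box corresponding to `[a, b)` under reflection. -/
def mkBox (a b : Fin n → ℝ) (hab : ∀ i, a i < b i) : Box (Fin n) :=
  ⟨fun i => -b i, fun i => -a i, fun i => neg_lt_neg (hab i)⟩

lemma mem_mkBox {a b p : Fin n → ℝ} {hab : ∀ i, a i < b i} :
    p ∈ (mkBox a b hab : Set (Fin n → ℝ)) ↔ (fun i => -p i) ∈ boxSet a b := by
  rw [Box.mem_coe, Box.mem_def, mem_boxSet]
  refine forall_congr' fun i => ?_
  rw [mem_Ioc]
  show -b i < p i ∧ p i ≤ -a i ↔ _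
  constructor
  · rintro ⟨h1, h2⟩
    exact ⟨by linarith, by linarith⟩
  · rintro ⟨h1, h2⟩
    exact ⟨by linarith, by linarith⟩

lemma boxVol_mkBox (f : (Fin n → ℝ) → ℝ) {a b : Fin n → ℝ} (hab : ∀ i, a i < b i) :
    boxVol f (mkBox a b hab) = vol f a b := by
  simp [boxVol, mkBox]

namespace IsCDF
variable {f : (Fin n → ℝ) → ℝ} (hf : IsCDF f)
include hf

/-- Finite subadditivity for half-open boxes. -/
lemma vol_le_sum_boxSet {a b : Fin n → ℝ} (hab : ∀ i, a i < b i) {A B : ℕ → Fin n → ℝ}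
    {t : Finset ℕ} (hAB : ∀ k i, A k i < B k i)
    (h : boxSet a b ⊆ ⋃ k ∈ t, boxSet (A k) (B k)) :
    vol f a b ≤ ∑ k ∈ t, vol f (A k) (B k) := by
  have hcov : ((mkBox a b hab : Box (Fin n)) : Set (Fin n → ℝ))
      ⊆ ⋃ k ∈ t, ↑(mkBox (A k) (B k) (hAB k)) := by
    intro p hp
    have h1 : (fun i => -p i) ∈ boxSet a b := mem_mkBox.1 hp
    obtain ⟨k, hk, hpk⟩ := Set.mem_iUnion₂.1 (h h1)
    exact Set.mem_iUnion₂.2 ⟨k, hk, mem_mkBox.2 hpk⟩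
  have := hf.boxVol_le_sum hcov
  rwa [boxVol_mkBox, Finset.sum_congr rfl fun k _ => boxVol_mkBox f (hAB k)] at this

/-- Countable subadditivity for half-open boxes. -/
lemma vol_le_tsum {a b : Fin n → ℝ} (hab : ∀ i, a i ≤ b i) {A B : ℕ → Fin n → ℝ}
    (hAB : ∀ k i, A k i ≤ B k i) (h : boxSet a b ⊆ ⋃ k, boxSet (A k) (B k)) :
    ofReal (vol f a b) ≤ ∑' k, ofReal (vol f (A k) (B k)) := by
  by_cases hdeg : ∃ i, a i = b i
  · obtain ⟨i, hi⟩ := hdeg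
    simp [vol_degenerate f hi]
  push_neg at hdeg
  have hab' : ∀ i, a i < b i := fun i => (hab i).lt_of_ne (hdeg i)
  refine ENNReal.le_of_forall_pos_le_add fun ε hε _ => ?_
  have hε2 : (0:ℝ) < (ε : ℝ) / 2 := by positivity
  obtain ⟨b', hb', hvb⟩ := hf.exists_upper_approx hab' hε2
  have hδ : (ofReal ((ε : ℝ) / 2)) ≠ 0 := by
    simp only [ne_eq, ENNReal.ofReal_eq_zero, not_le]; exact hε2
  obtain ⟨ε', hε'pos, hε'sum⟩ := ENNReal.exists_pos_sum_of_countable hδ ℕ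
  have hchoice : ∀ k, ∃ A' : Fin n → ℝ, (∀ i, A' i < A k i) ∧
      vol f A' (B k) ≤ vol f (A k) (B k) + ε' k := fun k =>
    hf.exists_lower_approx (A k) (B k) (by exact_mod_cast hε'pos k)
  choose A' hA' hvA using hchoice
  have hcov : Icc a b' ⊆ ⋃ k, Set.univ.pi fun i => Ioo (A' k i) (B k i) := by
    intro p hp
    have hpb : p ∈ boxSet a b := by
      rw [mem_boxSet]
      intro i
      exact ⟨hp.1 i, lt_of_le_of_lt (hp.2 i) (hb' i).2⟩
    obtain ⟨k, hk⟩ := Set.mem_iUnion.1 (h hpb)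
    rw [mem_boxSet] at hk
    refine Set.mem_iUnion.2 ⟨k, ?_⟩
    rw [Set.mem_univ_pi]
    exact fun i => ⟨lt_of_lt_of_le (hA' k i) (hk i).1, (hk i).2⟩
  obtain ⟨t, ht⟩ := (isCompact_Icc (a := a) (b := b')).elim_finite_subcover
    (fun k => Set.univ.pi fun i => Ioo (A' k i) (B k i))
    (fun k => isOpen_set_pi finite_univ fun i _ => isOpen_Ioo) hcov
  have hsub : boxSet a b' ⊆ ⋃ k ∈ t, boxSet (A' k) (B k) := by
    intro p hp
    rw [mem_boxSet] at hp
    have hpIcc : p ∈ Icc a b' := ⟨fun i => (hp i).1, fun i => (hp i).2.le⟩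
    obtain ⟨k, hk, hpk⟩ := Set.mem_iUnion₂.1 (ht hpIcc)
    rw [Set.mem_univ_pi] at hpk
    refine Set.mem_iUnion₂.2 ⟨k, hk, ?_⟩
    rw [mem_boxSet]
    exact fun i => ⟨(hpk i).1.le, (hpk i).2⟩
  have hab'' : ∀ i, a i < b' i := fun i => (hb' i).1
  have hAB' : ∀ k i, A' k i < B k i := fun k i => lt_of_lt_of_le (hA' k i) (hAB k i)
  have hfin := hf.vol_le_sum_boxSet hab'' hAB' hsub
  have hnn : ∀ k, 0 ≤ vol f (A' k) (B k) := fun k => hf.vol_nonneg _ _ fun i => (hAB' k i).le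
  calc ofReal (vol f a b) ≤ ofReal (vol f a b' + (ε : ℝ)/2) :=
        ENNReal.ofReal_le_ofReal (by linarith)
    _ ≤ ofReal (vol f a b') + ofReal ((ε : ℝ)/2) := ENNReal.ofReal_add_le
    _ ≤ ofReal (∑ k ∈ t, vol f (A' k) (B k)) + ofReal ((ε : ℝ)/2) := by
        gcongr
    _ = (∑ k ∈ t, ofReal (vol f (A' k) (B k))) + ofReal ((ε : ℝ)/2) := by
        rw [ENNReal.ofReal_sum_of_nonneg fun k _ => hnn k]
    _ ≤ (∑ k ∈ t, (ofReal (vol f (A k) (B k)) + (ε' k : ℝ≥0∞))) + ofReal ((ε : ℝ)/2) := by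
        gcongr with k hk
        calc ofReal (vol f (A' k) (B k)) ≤ ofReal (vol f (A k) (B k) + (ε' k : ℝ)) :=
              ENNReal.ofReal_le_ofReal (hvA k)
          _ ≤ ofReal (vol f (A k) (B k)) + ofReal (ε' k : ℝ) := ENNReal.ofReal_add_le
          _ = ofReal (vol f (A k) (B k)) + (ε' k : ℝ≥0∞) := by
              rw [ENNReal.ofReal_coe_nnreal]
    _ = (∑ k ∈ t, ofReal (vol f (A k) (B k))) + (∑ k ∈ t, (ε' k : ℝ≥0∞))
        + ofReal ((ε : ℝ)/2) := by rw [Finset.sum_add_distrib]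
    _ ≤ (∑' k, ofReal (vol f (A k) (B k))) + ofReal ((ε : ℝ)/2) + ofReal ((ε : ℝ)/2) := by
        gcongr
        · exact ENNReal.sum_le_tsum t
        · exact le_trans (ENNReal.sum_le_tsum t) hε'sum.le
    _ = (∑' k, ofReal (vol f (A k) (B k))) + (ofReal ((ε : ℝ)/2) + ofReal ((ε : ℝ)/2)) := by
        rw [add_assoc]
    _ ≤ (∑' k, ofReal (vol f (A k) (B k))) + ε := by
        gcongr
        rw [← ENNReal.ofReal_add (by positivity) (by positivity)]
        rw [add_halves, ENNReal.ofReal_coe_nnreal]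

end IsCDF

open scoped Classical in
/-- Pre-measure used to define the outer measure. -/
noncomputable def mFun (f : (Fin n → ℝ) → ℝ) (S : Set (Fin n → ℝ)) : ℝ≥0∞ :=
  if S = ∅ then 0
  else ⨅ (a : Fin n → ℝ) (b : Fin n → ℝ) (_ : S ⊆ boxSet a b), ofReal (vol f a b)

lemma mFun_empty (f : (Fin n → ℝ) → ℝ) : mFun f ∅ = 0 := by unfold mFun; simp

lemma mFun_of_ne (f : (Fin n → ℝ) → ℝ) {S : Set (Fin n → ℝ)} (hS : S ≠ ∅) :
    mFun f S = ⨅ (a : Fin n → ℝ) (b : Fin n → ℝ) (_ : S ⊆ boxSet a b), ofReal (vol f a b) := by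
  unfold mFun; rw [if_neg hS]

lemma mFun_le (f : (Fin n → ℝ) → ℝ) {S : Set (Fin n → ℝ)} {a b : Fin n → ℝ}
    (h : S ⊆ boxSet a b) : mFun f S ≤ ofReal (vol f a b) := by
  rw [mFun]
  split_ifs with hS
  · exact zero_le
  · exact iInf_le_of_le a (iInf_le_of_le b (iInf_le _ h))

/-- The outer measure associated to an `n`-dimensional CDF. -/
noncomputable def cdfOuter (f : (Fin n → ℝ) → ℝ) : OuterMeasure (Fin n → ℝ) :=
  OuterMeasure.ofFunction (mFun f) (mFun_empty f)

namespace IsCDF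
variable {f : (Fin n → ℝ) → ℝ} (hf : IsCDF f)
include hf

lemma cdfOuter_boxSet {a b : Fin n → ℝ} (hab : ∀ i, a i ≤ b i) :
    cdfOuter f (boxSet a b) = ofReal (vol f a b) := by
  refine le_antisymm ((OuterMeasure.ofFunction_le _).trans (mFun_le f Subset.rfl)) ?_
  rw [cdfOuter, OuterMeasure.ofFunction_apply]
  refine le_iInf fun c => le_iInf fun hc => ?_
  rcases isEmpty_or_nonempty (Fin n) with hE | hNE
  · -- dimension 0 : every box has the same volume
    have hvol_const : ∀ A B : Fin n → ℝ, vol f A B = vol f a b := by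
      intro A B
      unfold vol
      refine Finset.sum_congr rfl fun φ _ => ?_
      congr 1
      congr 1
      exact Subsingleton.elim _ _
    have hp0 : (fun i : Fin n => (0:ℝ)) ∈ boxSet a b := by
      rw [mem_boxSet]; exact fun i => hE.elim i
    obtain ⟨k, hk⟩ := Set.mem_iUnion.1 (hc hp0)
    have : ofReal (vol f a b) ≤ mFun f (c k) := by
      rw [mFun_of_ne f (Set.nonempty_iff_ne_empty.1 ⟨_, hk⟩)]
      exact le_iInf fun A => le_iInf fun B => le_iInf fun _ => le_of_eq (by rw [hvol_const A B])
    exact this.trans (ENNReal.le_tsum k)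
  · by_cases htop : ∑' k, mFun f (c k) = ∞
    · rw [htop]; exact le_top
    have hfink : ∀ k, mFun f (c k) ≠ ∞ := fun k =>
      ne_top_of_le_ne_top htop (ENNReal.le_tsum k)
    refine ENNReal.le_of_forall_pos_le_add fun ε hε _ => ?_
    have hεne : ((ε : ℝ≥0∞)) ≠ 0 := by exact_mod_cast hε.ne'
    obtain ⟨ε', hε'pos, hε'sum⟩ := ENNReal.exists_pos_sum_of_countable hεne ℕ
    have hchoice : ∀ k, ∃ (A B : Fin n → ℝ), (∀ i, A i ≤ B i) ∧ c k ⊆ boxSet A B ∧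
        ofReal (vol f A B) ≤ mFun f (c k) + ε' k := by
      intro k
      by_cases hck : c k = ∅
      · refine ⟨b, b, fun i => le_rfl, by simp [hck], ?_⟩
        have : vol f b b = 0 := vol_degenerate f (rfl : b (Classical.arbitrary (Fin n)) = _)
        simp [this]
      · have hlt : mFun f (c k) < mFun f (c k) + ε' k :=
          ENNReal.lt_add_right (hfink k) (by exact_mod_cast (hε'pos k).ne')
        conv_lhs at hlt => rw [mFun, if_neg hck]
        simp only [iInf_lt_iff] at hlt
        obtain ⟨A, B, hsub, hval⟩ := hlt
        obtain ⟨p, hp⟩ := Set.nonempty_iff_ne_empty.2 hck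
        have hABle : ∀ i, A i ≤ B i := by
          intro i
          have := mem_boxSet.1 (hsub hp) i
          linarith [this.1, this.2]
        exact ⟨A, B, hABle, hsub, hval.le⟩
    choose A B hAB hsub hval using hchoice
    have hcover : boxSet a b ⊆ ⋃ k, boxSet (A k) (B k) :=
      hc.trans (Set.iUnion_mono hsub)
    calc ofReal (vol f a b) ≤ ∑' k, ofReal (vol f (A k) (B k)) :=
          hf.vol_le_tsum hab hAB hcover
      _ ≤ ∑' k, (mFun f (c k) + ε' k) := ENNReal.tsum_le_tsum hval
      _ = (∑' k, mFun f (c k)) + ∑' k, (ε' k : ℝ≥0∞) := ENNReal.tsum_add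
      _ ≤ (∑' k, mFun f (c k)) + ε := add_le_add (le_refl _) hε'sum.le

lemma isCaratheodory_halfspace (i : Fin n) (c : ℝ) :
    MeasurableSet[(cdfOuter f).caratheodory] {p : Fin n → ℝ | p i < c} := by
  refine OuterMeasure.ofFunction_caratheodory fun S => ?_
  by_cases hS : S = ∅
  · subst hS
    simp [Set.empty_inter, Set.empty_diff, mFun_empty]
  · rw [mFun_of_ne f hS]
    refine le_iInf fun a => le_iInf fun b => le_iInf fun hSab => ?_
    obtain ⟨p, hp⟩ := Set.nonempty_iff_ne_empty.2 hS
    have hpab := mem_boxSet.1 (hSab hp)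
    rcases le_or_gt c (a i) with hc | hc
    · have h1 : S ∩ {p : Fin n → ℝ | p i < c} = ∅ := by
        rw [Set.eq_empty_iff_forall_notMem]
        rintro q ⟨hq1, hq2⟩
        have := (mem_boxSet.1 (hSab hq1) i).1
        simp only [Set.mem_setOf_eq] at hq2
        linarith
      rw [h1, mFun_empty, zero_add]
      exact mFun_le f (Set.diff_subset.trans hSab)
    rcases le_or_gt (b i) c with hc' | hc'
    · have h1 : S \ {p : Fin n → ℝ | p i < c} = ∅ := by
        rw [Set.eq_empty_iff_forall_notMem]
        rintro q ⟨hq1, hq2⟩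
        have := (mem_boxSet.1 (hSab hq1) i).2
        simp only [Set.mem_setOf_eq] at hq2
        exact hq2 (by linarith)
      rw [h1, mFun_empty, add_zero]
      exact mFun_le f (Set.inter_subset_left.trans hSab)
    · have e1 : mFun f (S ∩ {p : Fin n → ℝ | p i < c})
          ≤ ofReal (vol f a (Function.update b i c)) := by
        refine mFun_le f fun q hq => ?_
        rw [mem_boxSet]
        intro j
        have hj := mem_boxSet.1 (hSab hq.1) j
        by_cases hji : j = i
        · subst hji
          exact ⟨hj.1, by simpa using hq.2⟩
        · exact ⟨hj.1, by simpa [Function.update_of_ne hji] using hj.2⟩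
      have e2 : mFun f (S \ {p : Fin n → ℝ | p i < c})
          ≤ ofReal (vol f (Function.update a i c) b) := by
        refine mFun_le f fun q hq => ?_
        rw [mem_boxSet]
        intro j
        have hj := mem_boxSet.1 (hSab hq.1) j
        by_cases hji : j = i
        · subst hji
          have : ¬ q j < c := hq.2
          exact ⟨by simpa using not_lt.1 this, hj.2⟩
        · exact ⟨by simpa [Function.update_of_ne hji] using hj.1, hj.2⟩
      have hab : ∀ j, a j ≤ b j := fun j => le_of_lt (lt_of_le_of_lt (hpab j).1 (hpab j).2)
      have n1 : 0 ≤ vol f a (Function.update b i c) := by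
        refine hf.vol_nonneg _ _ fun j => ?_
        by_cases hji : j = i
        · subst hji; simpa using hc.le
        · simpa [Function.update_of_ne hji] using hab j
      have n2 : 0 ≤ vol f (Function.update a i c) b := by
        refine hf.vol_nonneg _ _ fun j => ?_
        by_cases hji : j = i
        · subst hji; simpa using hc'.le
        · simpa [Function.update_of_ne hji] using hab j
      calc mFun f (S ∩ {p : Fin n → ℝ | p i < c}) + mFun f (S \ {p : Fin n → ℝ | p i < c})
          ≤ ofReal (vol f a (Function.update b i c))
            + ofReal (vol f (Function.update a i c) b) := add_le_add e1 e2
        _ = ofReal (vol f a (Function.update b i c)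
            + vol f (Function.update a i c) b) := (ENNReal.ofReal_add n1 n2).symm
        _ = ofReal (vol f a b) := by rw [← vol_split]



end IsCDF

namespace IsCDF
variable {f : (Fin n → ℝ) → ℝ} (hf : IsCDF f)
include hf

lemma le_caratheodory :
    (inferInstance : MeasurableSpace (Fin n → ℝ)) ≤ (cdfOuter f).caratheodory := by
  have heq : (inferInstance : MeasurableSpace (Fin n → ℝ))
      = ⨆ i : Fin n, MeasurableSpace.comap (fun p : Fin n → ℝ => p i) Real.measurableSpace := rfl
  rw [heq]
  refine iSup_le fun i => ?_
  rw [← measurable_iff_comap_le]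
  refine measurable_of_Iio fun c => ?_
  have : (fun p : Fin n → ℝ => p i) ⁻¹' (Iio c) = {p : Fin n → ℝ | p i < c} := rfl
  rw [this]
  exact hf.isCaratheodory_halfspace i c

/-- The measure associated to an `n`-dimensional CDF. -/
noncomputable def measure : Measure (Fin n → ℝ) :=
  (cdfOuter f).toMeasure hf.le_caratheodory

lemma measurableSet_boxSet (a b : Fin n → ℝ) : MeasurableSet (boxSet a b) :=
  MeasurableSet.univ_pi fun i => measurableSet_Ico

lemma measure_boxSet {a b : Fin n → ℝ} (hab : ∀ i, a i ≤ b i) :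
    hf.measure (boxSet a b) = ofReal (vol f a b) := by
  rw [IsCDF.measure, toMeasure_apply _ _ (measurableSet_boxSet hf a b),
    hf.cdfOuter_boxSet hab]

lemma measurableSet_ray (s : Fin n → ℝ) : MeasurableSet {p : Fin n → ℝ | ∀ i, p i < s i} := by
  have h : {p : Fin n → ℝ | ∀ i, p i < s i} = ⋂ i, {p : Fin n → ℝ | p i < s i} := by
    ext p; simp
  rw [h]
  exact MeasurableSet.iInter fun i =>
    measurableSet_lt (measurable_pi_apply i) measurable_const

lemma measure_ray (s : Fin n → ℝ) :
    hf.measure {p : Fin n → ℝ | ∀ i, p i < s i} = ofReal (f s) := by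
  set low : ℕ → Fin n → ℝ := fun k i => min (s i - 1) (-(k : ℝ)) with hlow
  have hmono : Monotone fun k => boxSet (low k) s := by
    intro k l hkl p hp
    rw [mem_boxSet] at hp ⊢
    intro i
    refine ⟨le_trans ?_ (hp i).1, (hp i).2⟩
    exact min_le_min le_rfl (by exact_mod_cast neg_le_neg (Nat.cast_le.2 hkl))
  have hunion : (⋃ k, boxSet (low k) s) = {p : Fin n → ℝ | ∀ i, p i < s i} := by
    ext p
    constructor
    · intro hp
      obtain ⟨k, hk⟩ := Set.mem_iUnion.1 hp
      exact fun i => (mem_boxSet.1 hk i).2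
    · intro hp
      obtain ⟨M, hM⟩ := Finset.exists_le (Finset.univ.image fun i => -p i)
      obtain ⟨k, hk⟩ := exists_nat_ge M
      refine Set.mem_iUnion.2 ⟨k, mem_boxSet.2 fun i => ⟨?_, hp i⟩⟩
      have h1 : -p i ≤ M := hM _ (Finset.mem_image_of_mem _ (Finset.mem_univ i))
      have h2 : -(k : ℝ) ≤ p i := by linarith
      exact le_trans (min_le_right _ _) h2
  have htend := tendsto_measure_iUnion_atTop (μ := hf.measure) hmono
  rw [hunion] at htend
  have hlowle : ∀ k i, low k i ≤ s i := fun k i =>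
    le_trans (min_le_left _ _) (by linarith)
  have hval : ∀ k, hf.measure (boxSet (low k) s) = ofReal (vol f (low k) s) := fun k =>
    hf.measure_boxSet (hlowle k)
  have hL : ∀ i, Tendsto (fun k => low k i) atTop atBot := by
    intro i
    refine tendsto_atBot_mono (fun k => min_le_right _ _) ?_
    exact tendsto_neg_atTop_atBot.comp tendsto_natCast_atTop_atTop
  have htend2 : Tendsto (fun k => hf.measure (boxSet (low k) s)) atTop (𝓝 (ofReal (f s))) := by
    simp only [hval]
    exact (ENNReal.continuous_ofReal.tendsto _).comp (hf.tendsto_vol_lower_atBot s low hL)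
  exact tendsto_nhds_unique htend htend2

lemma measure_univ : hf.measure Set.univ = 1 := by
  have hunion : (⋃ k : ℕ, {p : Fin n → ℝ | ∀ i, p i < (k : ℝ)}) = Set.univ := by
    rw [Set.eq_univ_iff_forall]
    intro p
    obtain ⟨M, hM⟩ := Finset.exists_le (Finset.univ.image p)
    obtain ⟨k, hk⟩ := exists_nat_ge (M + 1)
    refine Set.mem_iUnion.2 ⟨k, fun i => ?_⟩
    have := hM _ (Finset.mem_image_of_mem _ (Finset.mem_univ i))
    linarith
  have hmono : Monotone fun k : ℕ => {p : Fin n → ℝ | ∀ i, p i < (k : ℝ)} := by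
    intro k l hkl p hp i
    exact lt_of_lt_of_le (hp i) (by exact_mod_cast hkl)
  have htend := tendsto_measure_iUnion_atTop (μ := hf.measure) hmono
  rw [hunion] at htend
  have hval : ∀ k : ℕ, hf.measure {p : Fin n → ℝ | ∀ i, p i < (k : ℝ)}
      = ofReal (f fun _ => (k : ℝ)) := fun k => hf.measure_ray _
  have h2 : Tendsto (fun k : ℕ => hf.measure {p : Fin n → ℝ | ∀ i, p i < (k : ℝ)}) atTop
      (𝓝 1) := by
    simp only [hval]
    have hm : Monotone fun k : ℕ => f fun _ => (k : ℝ) := fun k l hkl =>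
      hf.mono fun i => by exact_mod_cast hkl
    have hb : BddAbove (Set.range fun k : ℕ => f fun _ => (k : ℝ)) :=
      ⟨1, by rintro x ⟨k, rfl⟩; exact hf.le_one _⟩
    have := tendsto_atTop_ciSup hm hb
    rw [hf.sup_f_nat] at this
    have := (ENNReal.continuous_ofReal.tendsto _).comp this
    rwa [ENNReal.ofReal_one] at this
  exact tendsto_nhds_unique htend h2



/-- Existence of a probability measure with the given distribution function. -/
theorem exists_measure :
    ∃ μ : Measure (Fin n → ℝ), IsProbabilityMeasure μ ∧
      ∀ s : Fin n → ℝ, μ {p | ∀ i, p i < s i} = ofReal (f s) :=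
  ⟨hf.measure, ⟨hf.measure_univ⟩, hf.measure_ray⟩

end IsCDF

/-- The rays generate the Borel σ-algebra of `ℝⁿ`. -/
lemma pi_eq_generateFrom_rays :
    (inferInstance : MeasurableSpace (Fin n → ℝ)) =
      MeasurableSpace.generateFrom
        {S : Set (Fin n → ℝ) | ∃ s : Fin n → ℝ, S = {p | ∀ i, p i < s i}} := by
  refine le_antisymm ?_ (MeasurableSpace.generateFrom_le ?_)
  · have heq : (inferInstance : MeasurableSpace (Fin n → ℝ))
        = ⨆ i : Fin n, MeasurableSpace.comap (fun p : Fin n → ℝ => p i) Real.measurableSpace :=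
      rfl
    rw [heq]
    refine iSup_le fun i => ?_
    rw [← measurable_iff_comap_le]
    refine measurable_of_Iio fun c => ?_
    have hpre : (fun p : Fin n → ℝ => p i) ⁻¹' Iio c
        = ⋃ k : ℕ, {p : Fin n → ℝ | ∀ j, p j < Function.update (fun _ => (k : ℝ)) i c j} := by
      ext p
      simp only [mem_preimage, mem_Iio, mem_iUnion, mem_setOf_eq]
      constructor
      · intro hp
        obtain ⟨M, hM⟩ := Finset.exists_le (Finset.univ.image p)
        obtain ⟨k, hk⟩ := exists_nat_ge (M + 1)
        refine ⟨k, fun j => ?_⟩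
        by_cases hj : j = i
        · subst hj; simpa using hp
        · rw [Function.update_of_ne hj]
          have := hM _ (Finset.mem_image_of_mem _ (Finset.mem_univ j))
          linarith
      · rintro ⟨k, hk⟩
        simpa using hk i
    rw [hpre]
    exact MeasurableSet.iUnion fun k =>
      MeasurableSpace.measurableSet_generateFrom ⟨_, rfl⟩
  · rintro S ⟨s, rfl⟩
    exact ray_measurableSet s

lemma isPiSystem_rays :
    IsPiSystem {S : Set (Fin n → ℝ) | ∃ s : Fin n → ℝ, S = {p | ∀ i, p i < s i}} := by
  rintro S ⟨s, rfl⟩ S' ⟨s', rfl⟩ _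
  refine ⟨fun i => min (s i) (s' i), ?_⟩
  ext p
  simp only [mem_inter_iff, mem_setOf_eq, lt_min_iff]
  exact ⟨fun ⟨h1, h2⟩ i => ⟨h1 i, h2 i⟩, fun h => ⟨fun i => (h i).1, fun i => (h i).2⟩⟩



end TribeSpectral

open TribeSpectral Set Filter Function MeasureTheory Topology
open ENNReal (ofReal)
open scoped ENNReal NNReal

lemma accumulate_nat_zero {α : Type*} (g : ℕ → Set α) : Set.accumulate g 0 = g 0 := by
  ext z
  simp [Set.mem_accumulate, Nat.le_zero]

lemma accumulate_nat_succ {α : Type*} (g : ℕ → Set α) (m : ℕ) :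
    Set.accumulate g (m + 1) = Set.accumulate g m ∪ g (m + 1) := by
  ext z
  simp only [Set.mem_accumulate, Set.mem_union]
  constructor
  · rintro ⟨i, hi, hz⟩
    rcases Nat.lt_or_ge i (m + 1) with h | h
    · exact Or.inl ⟨i, by omega, hz⟩
    · have : i = m + 1 := by omega
      exact Or.inr (this ▸ hz)
  · rintro (⟨i, hi, hz⟩ | hz)
    · exact ⟨i, by omega, hz⟩
    · exact ⟨m + 1, le_rfl, hz⟩

/-- For every `n`-dimensional spectral resolution `F` into an effect-tribe `T` there
is a unique `n`-dimensional observable `x` on `T` with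
`x((−∞,s₁)×⋯×(−∞,sₙ)) = F(s₁,…,sₙ)`. -/
theorem tribe_spectral_resolution_extends_to_observable {n : ℕ} {Ω : Type*}
    [Nonempty Ω] (T : Set (Ω → ℝ)) (hT : IsEffectTribe T)
    (F : (Fin n → ℝ) → Ω → ℝ) (hF : IsTribeSpectralResolution T F) :
    ∃! x : {S : Set (Fin n → ℝ) // MeasurableSet S} → Ω → ℝ,
      IsTribeObservable T x ∧
      ∀ s : Fin n → ℝ,
        x ⟨{p | ∀ i, p i < s i}, ray_measurableSet s⟩ = F s := by
  classical
  obtain ⟨hT1, hT2, hT3, hT4, hT5⟩ := hT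
  obtain ⟨hF1, hF2, hF3, hF4, hF5, hF6⟩ := hF
  have hcdf : ∀ ω : Ω, IsCDF fun s => F s ω := fun ω =>
    { nonneg := fun s => (hT1 _ (hF1 s) ω).1
      le_one := fun s => (hT1 _ (hF1 s) ω).2
      mono := fun {s t} h => hF2 s t h ω
      sup_one := hF3 ω
      left_cont := fun t => hF4 t ω
      inf_zero := fun i t => hF5 i t ω
      vol_nonneg := fun a b hab => by
        exact hF6 a b hab ω }
  choose μ hμprob hμray using fun ω => (hcdf ω).exists_measure
  haveI : ∀ ω, IsProbabilityMeasure (μ ω) := hμprob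
  set x : {S : Set (Fin n → ℝ) // MeasurableSet S} → Ω → ℝ :=
    fun S ω => (μ ω S.1).toReal with hxdef
  have hfin : ∀ (ω) (S : Set (Fin n → ℝ)), μ ω S ≠ ∞ := fun ω S => measure_ne_top _ _
  have hle1 : ∀ (ω) (S : Set (Fin n → ℝ)), μ ω S ≤ 1 := fun ω S => prob_le_one
  -- the ray condition
  have hxray : ∀ s : Fin n → ℝ, x ⟨{p | ∀ i, p i < s i}, ray_measurableSet s⟩ = F s := by
    intro s
    funext ω
    show (μ ω {p | ∀ i, p i < s i}).toReal = F s ω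
    rw [hμray ω s, ENNReal.toReal_ofReal ((hcdf ω).nonneg s)]
  -- `x` of the empty set
  have hxempty : ∀ ω, x ⟨∅, MeasurableSet.empty⟩ ω = 0 := by
    intro ω; show (μ ω ∅).toReal = 0; simp
  -- additivity of `x`
  have hxadd : ∀ S₁ S₂ : {S : Set (Fin n → ℝ) // MeasurableSet S}, Disjoint S₁.1 S₂.1 →
      ∀ ω, x ⟨S₁.1 ∪ S₂.1, S₁.2.union S₂.2⟩ ω = x S₁ ω + x S₂ ω := by
    intro S₁ S₂ hd ω
    show (μ ω (S₁.1 ∪ S₂.1)).toReal = (μ ω S₁.1).toReal + (μ ω S₂.1).toReal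
    rw [measure_union hd S₂.2, ENNReal.toReal_add (hfin ω _) (hfin ω _)]
  -- monotone continuity of `x`
  have hxsup : ∀ S : ℕ → {S : Set (Fin n → ℝ) // MeasurableSet S},
      Monotone (fun k => (S k).1) → ∀ ω, (⨆ k, x (S k) ω) =
        x ⟨⋃ k, (S k).1, MeasurableSet.iUnion fun k => (S k).2⟩ ω := by
    intro S hm ω
    have htend := tendsto_measure_iUnion_atTop (μ := μ ω) hm
    have htendR : Tendsto (fun k => x (S k) ω) atTop
        (𝓝 ((μ ω (⋃ k, (S k).1)).toReal)) := by
      have := (ENNReal.tendsto_toReal (hfin ω _)).comp htend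
      exact this
    have hmonoR : Monotone fun k => x (S k) ω := fun k l hkl =>
      ENNReal.toReal_mono (hfin ω _) (measure_mono (hm hkl))
    have hbddR : BddAbove (Set.range fun k => x (S k) ω) := by
      refine ⟨1, ?_⟩
      rintro r ⟨k, rfl⟩
      show (μ ω (S k).1).toReal ≤ 1
      simpa using ENNReal.toReal_mono (by simp) (hle1 ω (S k).1)
    exact tendsto_nhds_unique (tendsto_atTop_ciSup hmonoR hbddR) htendR
  -- `x S` belongs to the tribe
  have h0T : (fun _ : Ω => (0 : ℝ)) ∈ T := by simpa using hT3 _ hT2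
  have hmem : ∀ S : {S : Set (Fin n → ℝ) // MeasurableSet S}, x S ∈ T := by
    rintro ⟨S, hS⟩
    show (fun ω => (μ ω S).toReal) ∈ T
    refine MeasurableSpace.induction_on_inter
      (C := fun S : Set (Fin n → ℝ) => fun _ => (fun ω => (μ ω S).toReal) ∈ T)
      (s := {S : Set (Fin n → ℝ) | ∃ s : Fin n → ℝ, S = {p | ∀ i, p i < s i}})
      pi_eq_generateFrom_rays isPiSystem_rays ?_ ?_ ?_ ?_ S hS
    · simpa using h0T
    · rintro t ⟨s, rfl⟩
      have : (fun ω => (μ ω {p | ∀ i, p i < s i}).toReal) = F s := hxray s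
      rw [this]; exact hF1 s
    · intro t htm iht
      have heq : (fun ω => (μ ω tᶜ).toReal) = fun ω => 1 - (μ ω t).toReal := by
        funext ω
        rw [measure_compl htm (hfin ω t)]
        rw [measure_univ, ENNReal.toReal_sub_of_le (hle1 ω t) (by simp)]
        simp
      rw [heq]
      exact hT3 _ iht
    · intro g hdisj hgm ihg
      have hAcc : ∀ m, MeasurableSet (Set.accumulate g m) := fun m =>
        MeasurableSet.biUnion (Set.to_countable _) fun i _ => hgm i
      have hd : ∀ m, Disjoint (Set.accumulate g m) (g (m + 1)) := by
        intro m
        rw [Set.disjoint_left]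
        rintro p hp hp1
        rw [Set.mem_accumulate] at hp
        obtain ⟨i, him, hpi⟩ := hp
        exact Set.disjoint_left.1 (hdisj (show i ≠ m + 1 by omega)) hpi hp1
      have hmemAcc : ∀ m, (fun ω => (μ ω (Set.accumulate g m)).toReal) ∈ T := by
        intro m
        induction m with
        | zero => simpa [accumulate_nat_zero] using ihg 0
        | succ m ihm =>
            have heq : (fun ω => (μ ω (Set.accumulate g (m + 1))).toReal)
                = fun ω => (μ ω (Set.accumulate g m)).toReal + (μ ω (g (m + 1))).toReal := by
              funext ω
              rw [accumulate_nat_succ, measure_union (hd m) (hgm (m + 1)),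
                ENNReal.toReal_add (hfin ω _) (hfin ω _)]
            rw [heq]
            refine hT4 _ ihm _ (ihg (m + 1)) fun ω => ?_
            have : (μ ω (Set.accumulate g m)).toReal + (μ ω (g (m + 1))).toReal ≤ 1 := by
              rw [← ENNReal.toReal_add (hfin ω _) (hfin ω _),
                ← measure_union (hd m) (hgm (m + 1)), ← accumulate_nat_succ]
              simpa using ENNReal.toReal_mono (by simp) (hle1 ω _)
            linarith
      have hmono2 : ∀ (m) (ω), (μ ω (Set.accumulate g m)).toReal
          ≤ (μ ω (Set.accumulate g (m + 1))).toReal := fun m ω =>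
        ENNReal.toReal_mono (hfin ω _) (measure_mono (monotone_accumulate (by omega)))
      have hsupT := hT5 _ hmemAcc hmono2
      have heq2 : (fun ω => ⨆ m, (μ ω (Set.accumulate g m)).toReal)
          = fun ω => (μ ω (⋃ i, g i)).toReal := by
        funext ω
        have htend := tendsto_measure_iUnion_atTop (μ := μ ω)
          (monotone_accumulate : Monotone (Set.accumulate g))
        rw [Set.iUnion_accumulate] at htend
        have htendR := (ENNReal.tendsto_toReal (hfin ω _)).comp htend
        have hmonoR : Monotone fun m => (μ ω (Set.accumulate g m)).toReal := by
          intro k l hkl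
          exact ENNReal.toReal_mono (hfin ω _) (measure_mono (monotone_accumulate hkl))
        have hbddR : BddAbove (Set.range fun m => (μ ω (Set.accumulate g m)).toReal) := by
          refine ⟨1, ?_⟩
          rintro r ⟨m, rfl⟩
          simpa using ENNReal.toReal_mono (by simp) (hle1 ω _)
        exact tendsto_nhds_unique (tendsto_atTop_ciSup hmonoR hbddR) htendR
      rw [← heq2]
      exact hsupT
  -- `x univ = 1`
  have hxuniv : x ⟨Set.univ, MeasurableSet.univ⟩ = fun _ => (1 : ℝ) := by
    funext ω
    show (μ ω Set.univ).toReal = 1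
    simp
  refine ⟨x, ⟨⟨hmem, hxuniv, hxadd, hxsup⟩, hxray⟩, ?_⟩
  -- uniqueness
  rintro y ⟨⟨hy1, hy2, hy3, hy4⟩, hyray⟩
  -- facts valid for any observable
  have hemptyZ : ∀ (z : {S : Set (Fin n → ℝ) // MeasurableSet S} → Ω → ℝ),
      (∀ S₁ S₂ : {S : Set (Fin n → ℝ) // MeasurableSet S}, Disjoint S₁.1 S₂.1 →
        ∀ ω, z ⟨S₁.1 ∪ S₂.1, S₁.2.union S₂.2⟩ ω = z S₁ ω + z S₂ ω) →
      ∀ ω, z ⟨∅, MeasurableSet.empty⟩ ω = 0 := by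
    intro z hz ω
    have h1 := hz ⟨∅, MeasurableSet.empty⟩ ⟨∅, MeasurableSet.empty⟩ (by simp) ω
    have h2 : (⟨(∅ : Set (Fin n → ℝ)) ∪ ∅, MeasurableSet.empty.union MeasurableSet.empty⟩ :
        {S : Set (Fin n → ℝ) // MeasurableSet S}) = ⟨∅, MeasurableSet.empty⟩ :=
      Subtype.ext (by simp)
    rw [h2] at h1
    linarith
  have hxy : ∀ t : Set (Fin n → ℝ), MeasurableSet t →
      ∀ ht : MeasurableSet t, y ⟨t, ht⟩ = x ⟨t, ht⟩ := by
    intro t htm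
    refine MeasurableSpace.induction_on_inter
      (C := fun t : Set (Fin n → ℝ) => fun _ => ∀ ht : MeasurableSet t, y ⟨t, ht⟩ = x ⟨t, ht⟩)
      (s := {S : Set (Fin n → ℝ) | ∃ s : Fin n → ℝ, S = {p | ∀ i, p i < s i}})
      pi_eq_generateFrom_rays isPiSystem_rays ?_ ?_ ?_ ?_ t htm
    · intro ht
      funext ω
      rw [show (⟨∅, ht⟩ : {S : Set (Fin n → ℝ) // MeasurableSet S})
        = ⟨∅, MeasurableSet.empty⟩ from rfl]
      rw [hemptyZ y hy3 ω, hemptyZ x hxadd ω]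
    · rintro t ⟨s, rfl⟩
      intro ht
      rw [show (⟨{p | ∀ i, p i < s i}, ht⟩ : {S : Set (Fin n → ℝ) // MeasurableSet S})
        = ⟨{p | ∀ i, p i < s i}, ray_measurableSet s⟩ from rfl]
      rw [hyray s, hxray s]
    · intro t htm2 iht ht
      have hcomplZ : ∀ (z : {S : Set (Fin n → ℝ) // MeasurableSet S} → Ω → ℝ),
          z ⟨Set.univ, MeasurableSet.univ⟩ = (fun _ => (1:ℝ)) →
          (∀ S₁ S₂ : {S : Set (Fin n → ℝ) // MeasurableSet S}, Disjoint S₁.1 S₂.1 →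
            ∀ ω, z ⟨S₁.1 ∪ S₂.1, S₁.2.union S₂.2⟩ ω = z S₁ ω + z S₂ ω) →
          ∀ ω, z ⟨tᶜ, ht⟩ ω = 1 - z ⟨t, htm2⟩ ω := by
        intro z hzu hz ω
        have h1 := hz ⟨t, htm2⟩ ⟨tᶜ, ht⟩ disjoint_compl_right ω
        have h2 : (⟨t ∪ tᶜ, htm2.union ht⟩ : {S : Set (Fin n → ℝ) // MeasurableSet S})
            = ⟨Set.univ, MeasurableSet.univ⟩ := Subtype.ext (by simp)
        rw [h2, hzu] at h1
        simp only at h1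
        linarith
      funext ω
      rw [hcomplZ y hy2 hy3 ω, hcomplZ x hxuniv hxadd ω, iht htm2]
    · intro g hdisj hgm ihg ht
      have hAcc : ∀ m, MeasurableSet (Set.accumulate g m) := fun m =>
        MeasurableSet.biUnion (Set.to_countable _) fun i _ => hgm i
      have hd : ∀ m, Disjoint (Set.accumulate g m) (g (m + 1)) := by
        intro m
        rw [Set.disjoint_left]
        rintro p hp hp1
        rw [Set.mem_accumulate] at hp
        obtain ⟨i, him, hpi⟩ := hp
        exact Set.disjoint_left.1 (hdisj (show i ≠ m + 1 by omega)) hpi hp1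
      have hpart : ∀ m, y ⟨Set.accumulate g m, hAcc m⟩ = x ⟨Set.accumulate g m, hAcc m⟩ := by
        intro m
        induction m with
        | zero =>
            have h0 : (⟨Set.accumulate g 0, hAcc 0⟩ :
                {S : Set (Fin n → ℝ) // MeasurableSet S}) = ⟨g 0, hgm 0⟩ :=
              Subtype.ext (accumulate_nat_zero g)
            rw [h0]
            exact ihg 0 (hgm 0)
        | succ m ihm =>
            have hsucc : (⟨Set.accumulate g (m+1), hAcc (m+1)⟩ :
                {S : Set (Fin n → ℝ) // MeasurableSet S})
                = ⟨Set.accumulate g m ∪ g (m+1), (hAcc m).union (hgm (m+1))⟩ :=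
              Subtype.ext (accumulate_nat_succ g m)
            funext ω
            rw [hsucc]
            rw [hy3 ⟨Set.accumulate g m, hAcc m⟩ ⟨g (m+1), hgm (m+1)⟩ (hd m) ω,
              hxadd ⟨Set.accumulate g m, hAcc m⟩ ⟨g (m+1), hgm (m+1)⟩ (hd m) ω,
              ihm, ihg (m+1) (hgm (m+1))]
      funext ω
      have huy := hy4 (fun m => ⟨Set.accumulate g m, hAcc m⟩)
        (fun k l hkl => monotone_accumulate hkl) ω
      have hux := hxsup (fun m => ⟨Set.accumulate g m, hAcc m⟩)
        (fun k l hkl => monotone_accumulate hkl) ω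
      have hU : (⟨⋃ m, Set.accumulate g m, MeasurableSet.iUnion fun m => hAcc m⟩ :
          {S : Set (Fin n → ℝ) // MeasurableSet S}) = ⟨⋃ i, g i, ht⟩ :=
        Subtype.ext (Set.iUnion_accumulate)
      rw [hU] at huy hux
      rw [← huy, ← hux]
      have hfe : (fun m => y ⟨Set.accumulate g m, hAcc m⟩ ω)
          = fun m => x ⟨Set.accumulate g m, hAcc m⟩ ω := funext fun m => by rw [hpart m]
      rw [show (⨆ m, y ⟨Set.accumulate g m, hAcc m⟩ ω)
        = ⨆ m, x ⟨Set.accumulate g m, hAcc m⟩ ω from congrArg _ hfe]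
  funext S
  have := hxy S.1 S.2 S.2
  simpa using this
end
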